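/- arXiv:2208.08763 — 5 statements merged into one kernel-verified Lean document; each statement's English description precedes it below -/
import Mathlib

section
/- Let n be a natural number and let g be a non-identity permutation of Fin n. If the normalizer N of the cyclic subgroup ⟨g⟩ inside the symmetric group Sym(n) acts transitively on Fin n (i.e., for all a, b ∈ Fin n there exists σ ∈ N with σ(a) = b), then g is semiregular, that is, all orbits of the cyclic subgroup ⟨g⟩ on Fin n have the same cardinality. -/
/-- If the normalizer of `⟨g⟩` in `Sym(n)` is transitive on `Fin n`, then all orbits of
`⟨g⟩` on `Fin n` have the same cardinality, i.e. `g` is semiregular. -/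
theorem stmt_1 (n : ℕ) (g : Equiv.Perm (Fin n)) (hg : g ≠ 1)
    (htrans : ∀ a b : Fin n,
      ∃ σ ∈ Subgroup.normalizer (Subgroup.zpowers g : Set (Equiv.Perm (Fin n))), σ a = b) :
    ∀ a b : Fin n,
      Nat.card (MulAction.orbit (Subgroup.zpowers g) a) =
        Nat.card (MulAction.orbit (Subgroup.zpowers g) b) := by
  intro a b
  obtain ⟨σ, hσ, hab⟩ := htrans a b
  have key : σ '' (MulAction.orbit (Subgroup.zpowers g) a)
      = MulAction.orbit (Subgroup.zpowers g) b := by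
    ext x
    simp only [Set.mem_image, MulAction.mem_orbit_iff]
    constructor
    · rintro ⟨y, ⟨⟨h, hh⟩, rfl⟩, rfl⟩
      refine ⟨⟨σ * h * σ⁻¹, (Subgroup.mem_normalizer_iff.mp hσ h).mp hh⟩, ?_⟩
      simp [Subgroup.smul_def, Equiv.Perm.mul_apply, ← hab]
    · rintro ⟨⟨h, hh⟩, rfl⟩
      refine ⟨(σ⁻¹ * h * σ) a, ⟨⟨σ⁻¹ * h * σ, ?_⟩, rfl⟩, ?_⟩
      · have := (Subgroup.mem_normalizer_iff.mp (Subgroup.inv_mem _ hσ) h).mp hh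
        simpa using this
      · simp [Subgroup.smul_def, Equiv.Perm.mul_apply, hab]
  calc Nat.card (MulAction.orbit (Subgroup.zpowers g) a)
      = Nat.card (σ '' (MulAction.orbit (Subgroup.zpowers g) a)) := by
        exact (Nat.card_image_of_injective σ.injective _).symm
    _ = Nat.card (MulAction.orbit (Subgroup.zpowers g) b) := by rw [key]
end

section
/- Let G be a finite group and let x, y be non-identity elements of G such that every element of G is a product u·v with u ∈ N_G(⟨x⟩) and v ∈ N_G(⟨y⟩). Then there exist elements x', y' ∈ G, each of prime order, such that every element of G is a product u·v with u ∈ N_G(⟨x'⟩) and v ∈ N_G(⟨y'⟩). -/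
lemma aux_prime_power {G : Type*} [Group G] [Finite G] (x : G) (hx : x ≠ 1) :
    ∃ x' : G, (orderOf x').Prime ∧
      Subgroup.normalizer (Subgroup.zpowers x : Set G) ≤ Subgroup.normalizer (Subgroup.zpowers x' : Set G) := by
  set n := orderOf x with hn
  have hn0 : n ≠ 0 := (orderOf_pos x).ne'
  have hn1 : n ≠ 1 := by simpa [hn, orderOf_eq_one_iff] using hx
  set p := n.minFac with hp
  have hpp : p.Prime := Nat.minFac_prime hn1
  have hpd : p ∣ n := Nat.minFac_dvd n
  set k := n / p with hk
  have hkd : k ∣ n := Nat.div_dvd_of_dvd hpd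
  have hnkp : (n : ℤ) = k * p := by exact_mod_cast (Nat.div_mul_cancel hpd).symm
  refine ⟨x ^ k, ?_, ?_⟩
  · have : orderOf (x ^ k) = n / Nat.gcd n k := by rw [orderOf_pow]
    rw [this, Nat.gcd_eq_right hkd, hk, Nat.div_div_self hpd hn0]
    exact hpp
  · have key : ∀ h : G, h ∈ Subgroup.zpowers (x ^ k) ↔
        h ∈ Subgroup.zpowers x ∧ h ^ p = 1 := by
      intro h
      constructor
      · rintro ⟨t, rfl⟩
        refine ⟨⟨k * t, ?_⟩, ?_⟩
        · show x ^ ((k : ℤ) * t) = (x ^ k) ^ t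
          rw [zpow_mul, zpow_natCast]
        · show ((x ^ k) ^ t) ^ p = 1
          have h1 : ((x ^ k) ^ t) ^ p = x ^ ((k : ℤ) * (t * p)) := by
            rw [← zpow_natCast ((x ^ k) ^ t), ← zpow_mul, ← zpow_natCast x, ← zpow_mul]
          rw [h1, ← orderOf_dvd_iff_zpow_eq_one, ← hn, hnkp]
          exact ⟨t, by ring⟩
      · rintro ⟨⟨m, rfl⟩, hone⟩
        have hz : x ^ (m * p) = 1 := by
          rw [zpow_mul, zpow_natCast]; exact hone
        have hd : (n : ℤ) ∣ m * p := by
          have := orderOf_dvd_iff_zpow_eq_one.mpr hz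
          rw [← hn] at this
          exact_mod_cast this
        have hkm : (k : ℤ) ∣ m := by
          rcases hd with ⟨c, hc⟩
          refine ⟨c, ?_⟩
          have hp0 : (p : ℤ) ≠ 0 := by exact_mod_cast hpp.ne_zero
          have h2 : m * p = k * c * p := by rw [hc, hnkp]; ring
          exact mul_right_cancel₀ hp0 h2
        rcases hkm with ⟨c, hc⟩
        refine ⟨c, ?_⟩
        show (x ^ k) ^ c = x ^ m
        rw [← zpow_natCast x k, ← zpow_mul, ← hc]
    have conj : ∀ g ∈ Subgroup.normalizer (Subgroup.zpowers x : Set G), ∀ h ∈ Subgroup.zpowers (x ^ k),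
        g * h * g⁻¹ ∈ Subgroup.zpowers (x ^ k) := by
      intro g hg h hh
      rw [key] at hh ⊢
      refine ⟨(Subgroup.mem_normalizer_iff.mp hg h).mp hh.1, ?_⟩
      rw [conj_pow, hh.2, mul_one, mul_inv_cancel]
    intro g hg
    rw [Subgroup.mem_normalizer_iff]
    intro h
    constructor
    · intro hh; exact conj g hg h hh
    · intro hh
      have := conj g⁻¹ ((Subgroup.normalizer (Subgroup.zpowers x : Set G)).inv_mem hg) _ hh
      simpa [mul_assoc] using this

/-- If a finite group `G` satisfies `G = N_G(⟨x⟩) N_G(⟨y⟩)` for non-identity elements `x, y`,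
then `G = N_G(⟨x'⟩) N_G(⟨y'⟩)` for some elements `x', y'` of prime order. -/
theorem stmt_3 {G : Type*} [Group G] [Finite G] (x y : G) (hx : x ≠ 1) (hy : y ≠ 1)
    (h : ∀ a : G, ∃ u ∈ Subgroup.normalizer (Subgroup.zpowers x : Set G),
      ∃ v ∈ Subgroup.normalizer (Subgroup.zpowers y : Set G), a = u * v) :
    ∃ x' y' : G, (orderOf x').Prime ∧ (orderOf y').Prime ∧
      ∀ a : G, ∃ u ∈ Subgroup.normalizer (Subgroup.zpowers x' : Set G),
        ∃ v ∈ Subgroup.normalizer (Subgroup.zpowers y' : Set G), a = u * v := by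
  obtain ⟨x', hx', hxle⟩ := aux_prime_power x hx
  obtain ⟨y', hy', hyle⟩ := aux_prime_power y hy
  refine ⟨x', y', hx', hy', fun a => ?_⟩
  obtain ⟨u, hu, v, hv, rfl⟩ := h a
  exact ⟨u, hxle hu, v, hyle hv, rfl⟩
end

section
/- Let n ≥ 5 be a prime number, let x be a transposition in Sym(n) and let y be an n-cycle in Sym(n). Then every element of Sym(n) is a product u·v with u ∈ N_{Sym(n)}(⟨x⟩) and v ∈ N_{Sym(n)}(⟨y⟩). -/
open Equiv Equiv.Perm Subgroup

private lemma mem_normalizer_of_commute {G : Type*} [Group G] {u g : G}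
    (h : Commute u g) : u ∈ Subgroup.normalizer (Subgroup.zpowers g : Set _) := by
  rw [Subgroup.mem_normalizer_iff]
  intro h'
  constructor
  · rintro ⟨m, rfl⟩
    have hc : u * g ^ (m : ℤ) * u⁻¹ = g ^ (m : ℤ) := by
      rw [mul_inv_eq_iff_eq_mul]; exact (h.zpow_right m)
    rw [hc]; exact Subgroup.zpow_mem _ (Subgroup.mem_zpowers g) m
  · rintro ⟨m, hm⟩
    simp only at hm
    have : h' = g ^ (m : ℤ) := by
      have hc : u * g ^ (m : ℤ) * u⁻¹ = g ^ (m : ℤ) := by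
        rw [mul_inv_eq_iff_eq_mul]; exact (h.zpow_right m)
      have h2 : u * h' * u⁻¹ = u * g ^ (m:ℤ) * u⁻¹ := hm.symm.trans hc.symm
      exact mul_left_cancel (mul_right_cancel h2)
    rw [this]; exact Subgroup.zpow_mem _ (Subgroup.mem_zpowers g) m

private lemma mem_normalizer_zpowers_of_conj {G : Type*} [Group G] {c g : G}
    (h1 : c * g * c⁻¹ ∈ Subgroup.zpowers g) (h2 : c⁻¹ * g * c ∈ Subgroup.zpowers g) :
    c ∈ Subgroup.normalizer (Subgroup.zpowers g : Set _) := by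
  rw [Subgroup.mem_normalizer_iff]
  obtain ⟨m, hm⟩ := h1
  obtain ⟨m', hm'⟩ := h2
  intro h'
  constructor
  · rintro ⟨j, rfl⟩
    have : c * g ^ (j : ℤ) * c⁻¹ = (c * g * c⁻¹) ^ (j : ℤ) := (conj_zpow).symm
    rw [this, ← hm, ← zpow_mul]
    exact ⟨m * j, rfl⟩
  · rintro ⟨j, hj⟩
    simp only at hj
    have : h' = c⁻¹ * g ^ (j : ℤ) * c := by
      rw [hj]; group
    rw [this, show c⁻¹ * g ^ (j : ℤ) * c = (c⁻¹ * g * c⁻¹⁻¹) ^ (j:ℤ) by rw [conj_zpow, inv_inv],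
      inv_inv, ← hm', ← zpow_mul]
    exact ⟨m' * j, rfl⟩

variable {n : ℕ}

private lemma supp_univ {y : Perm (Fin n)} (hy' : y.support.card = n) :
    y.support = Finset.univ :=
  Finset.eq_univ_of_card _ (by simpa using hy')

private lemma mov {y : Perm (Fin n)} (hy' : y.support.card = n) (a : Fin n) : y a ≠ a := by
  have := supp_univ hy'
  have ha : a ∈ y.support := this ▸ Finset.mem_univ a
  exact Equiv.Perm.mem_support.mp ha

private lemma ord_eq {y : Perm (Fin n)} (hy : y.IsCycle) (hy' : y.support.card = n) :
    orderOf y = n := by rw [hy.orderOf, hy']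

private lemma zpow_fix_eq_one (hp : n.Prime) {y : Perm (Fin n)} (hy : y.IsCycle)
    (hy' : y.support.card = n) {j : ℤ} {a : Fin n} (ha : (y ^ j) a = a) : y ^ j = 1 := by
  by_contra h
  have hord := ord_eq hy hy'
  have hnd : ¬ ((n : ℤ) ∣ j) :=
    fun hd => h (orderOf_dvd_iff_zpow_eq_one.mp (by rw [hord]; exact hd))
  have hcop : Nat.Coprime n j.natAbs :=
    (Nat.Prime.coprime_iff_not_dvd hp).mpr
      fun hd => hnd (Int.dvd_natAbs.mp (Int.natCast_dvd_natCast.mpr hd))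
  have hic : IsCoprime (j : ℤ) (n : ℤ) := by
    rw [Int.isCoprime_iff_gcd_eq_one, Int.gcd]
    simpa [Nat.coprime_comm] using hcop
  obtain ⟨s, t, hst⟩ := hic
  have hyn : y ^ (n : ℤ) = 1 := by
    rw [zpow_natCast]
    exact orderOf_dvd_iff_pow_eq_one.mp (by rw [hord])
  have hst' : j * s + (n : ℤ) * t = 1 := by linarith
  have hy1 : y = (y ^ j) ^ s := by
    calc y = y ^ (j * s + (n:ℤ) * t) := by rw [hst', zpow_one]
    _ = (y ^ j) ^ s * (y ^ (n:ℤ)) ^ t := by rw [zpow_add, zpow_mul, zpow_mul]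
    _ = (y ^ j) ^ s := by rw [hyn, one_zpow, mul_one]
  have : y a = a := by
    rw [hy1]
    exact Equiv.Perm.zpow_apply_eq_self_of_apply_eq_self ha s
  exact mov hy' a this

private lemma two_fix_eq_one (hp : n.Prime) {y : Perm (Fin n)} (hy : y.IsCycle)
    (hy' : y.support.card = n) {u : Perm (Fin n)}
    (hu : u ∈ Subgroup.normalizer (Subgroup.zpowers y : Set _)) {a b : Fin n} (hab : a ≠ b)
    (ha : u a = a) (hb : u b = b) : u = 1 := by
  have hord := ord_eq hy hy'
  have hsc : ∀ c, ∃ i : ℤ, (y ^ i) a = c := fun c => hy.sameCycle (mov hy' a) (mov hy' c)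
  obtain ⟨k, hk⟩ : ∃ k : ℤ, y ^ k = u * y * u⁻¹ :=
    (Subgroup.mem_normalizer_iff.mp hu y).mp (Subgroup.mem_zpowers y)
  by_cases hcy : y ^ k = y
  · have hc : Commute u y := by
      have h3 : u * y * u⁻¹ = y := by rw [← hk, hcy]
      rw [mul_inv_eq_iff_eq_mul] at h3
      exact h3
    refine Equiv.ext fun c => ?_
    simp only [Equiv.Perm.one_apply]
    obtain ⟨i, hi⟩ := hsc c
    have hci : Commute u (y ^ i) := hc.zpow_right i
    calc u c = (u * y ^ i) a := by rw [← hi]; rfl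
    _ = (y ^ i * u) a := by rw [hci]
    _ = (y ^ i) a := by simp [Equiv.Perm.mul_apply, ha]
    _ = c := hi
  · obtain ⟨j, hj⟩ := hsc b
    have hinva : u⁻¹ a = a := by
      conv_lhs => rw [← ha]
      simp
    have hconj : u * y ^ j * u⁻¹ = y ^ (k * j) := by
      rw [show u * y ^ j * u⁻¹ = (u * y * u⁻¹) ^ j from conj_zpow.symm, ← hk, ← zpow_mul]
    have hb2 : (y ^ (k * j)) a = b := by
      rw [← hconj]
      show u ((y ^ j) (u⁻¹ a)) = b
      rw [hinva, hj, hb]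
    have hfixb : (y ^ (k * j - j)) b = b := by
      have h1 : (y ^ (k * j - j)) ((y ^ j) a) = (y ^ (k * j)) a := by
        rw [← Equiv.Perm.mul_apply, ← zpow_add, sub_add_cancel]
      rw [hj, hb2] at h1
      exact h1
    have hone : y ^ (k * j - j) = 1 := zpow_fix_eq_one hp hy hy' hfixb
    have hdvd : (n : ℤ) ∣ (k - 1) * j := by
      have := (orderOf_dvd_iff_zpow_eq_one (x := y)).mpr hone
      rw [ord_eq hy hy'] at this
      convert this using 1
      ring
    rcases Int.Prime.dvd_mul' hp hdvd with hd | hd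
    · exfalso
      apply hcy
      have h1 : y ^ (k - 1) = 1 :=
        orderOf_dvd_iff_zpow_eq_one.mp (by rw [ord_eq hy hy']; exact hd)
      calc y ^ k = y ^ (k - 1) * y := by rw [← zpow_add_one, sub_add_cancel]
      _ = y := by rw [h1, one_mul]
    · exfalso
      have h1 : y ^ j = 1 :=
        orderOf_dvd_iff_zpow_eq_one.mp (by rw [ord_eq hy hy']; exact hd)
      rw [h1] at hj
      exact hab (by simpa using hj)

private lemma zpow_swap_cases {α : Type*} [DecidableEq α] {a b : α} (m : ℤ) :
    (Equiv.swap a b) ^ m = 1 ∨ (Equiv.swap a b) ^ m = Equiv.swap a b := by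
  set x := Equiv.swap a b with hxdef
  have h2 : x * x = 1 := Equiv.swap_mul_self a b
  have heven : ∀ t : ℤ, x ^ (t + t) = 1 := by
    intro t
    rw [zpow_add, ← (Commute.refl x).mul_zpow, h2, one_zpow]
  rcases Int.even_or_odd m with ⟨t, ht⟩ | ⟨t, ht⟩
  · left; rw [ht]; exact heven t
  · right; rw [ht, zpow_add, zpow_one, show (2:ℤ) * t = t + t by ring, heven t, one_mul]

private lemma commute_of_mem_normalizer_swap {a b : Fin n} (hab : a ≠ b)
    {u : Perm (Fin n)} (hu : u ∈ Subgroup.normalizer (Subgroup.zpowers (Equiv.swap a b) : Set _)) :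
    u * Equiv.swap a b = Equiv.swap a b * u := by
  set x := Equiv.swap a b with hxdef
  obtain ⟨k, hk⟩ : ∃ k : ℤ, x ^ k = u * x * u⁻¹ :=
    (Subgroup.mem_normalizer_iff.mp hu x).mp (Subgroup.mem_zpowers x)
  rcases zpow_swap_cases (a := a) (b := b) k with h | h
  · exfalso
    rw [← hxdef] at h
    have h1 : u * x * u⁻¹ = 1 := by rw [← hk, h]
    have h2 : x = 1 := by
      have : x = u⁻¹ * (u * x * u⁻¹) * u := by group
      rw [this, h1]; group
    apply hab
    have := congrArg (fun p : Perm (Fin n) => p a) h2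
    simpa [hxdef] using this.symm
  · rw [← hxdef] at h
    have h1 : u * x * u⁻¹ = x := by rw [← hk, h]
    rw [mul_inv_eq_iff_eq_mul] at h1
    exact h1

private lemma swap_dichotomy (hp : n.Prime) {y : Perm (Fin n)} (hy : y.IsCycle)
    (hy' : y.support.card = n) {a b : Fin n} (hab : a ≠ b) {u : Perm (Fin n)}
    (huH : u ∈ Subgroup.normalizer (Subgroup.zpowers (Equiv.swap a b) : Set _))
    (huK : u ∈ Subgroup.normalizer (Subgroup.zpowers y : Set _)) (hune : u ≠ 1) :
    u a = b ∧ u b = a := by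
  have hcomm := commute_of_mem_normalizer_swap hab huH
  have h1 : u b = Equiv.swap a b (u a) := by
    have := congrArg (fun p : Perm (Fin n) => p a) hcomm
    simpa using this
  have hua : u a ≠ a := by
    intro haa
    apply hune
    refine two_fix_eq_one hp hy hy' huK hab haa ?_
    rw [h1, haa, Equiv.swap_apply_left]
  by_cases hab2 : u a = b
  · refine ⟨hab2, ?_⟩
    rw [h1, hab2, Equiv.swap_apply_right]
  · exfalso
    rw [Equiv.swap_apply_of_ne_of_ne hua hab2] at h1
    exact hab (u.injective h1).symm

private lemma inter_eq (hp : n.Prime) {y : Perm (Fin n)} (hy : y.IsCycle)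
    (hy' : y.support.card = n) {a b : Fin n} (hab : a ≠ b) {u₁ u₂ : Perm (Fin n)}
    (h1H : u₁ ∈ Subgroup.normalizer (Subgroup.zpowers (Equiv.swap a b) : Set _))
    (h1K : u₁ ∈ Subgroup.normalizer (Subgroup.zpowers y : Set _))
    (h2H : u₂ ∈ Subgroup.normalizer (Subgroup.zpowers (Equiv.swap a b) : Set _))
    (h2K : u₂ ∈ Subgroup.normalizer (Subgroup.zpowers y : Set _))
    (h1ne : u₁ ≠ 1) (h2ne : u₂ ≠ 1) : u₁ = u₂ := by
  obtain ⟨h1a, h1b⟩ := swap_dichotomy hp hy hy' hab h1H h1K h1ne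
  obtain ⟨h2a, h2b⟩ := swap_dichotomy hp hy hy' hab h2H h2K h2ne
  have hwK : u₁ * u₂⁻¹ ∈ Subgroup.normalizer (Subgroup.zpowers y : Set _) :=
    mul_mem h1K (inv_mem h2K)
  have hinv_a : u₂⁻¹ a = b := by rw [Equiv.Perm.inv_eq_iff_eq, h2b]
  have hinv_b : u₂⁻¹ b = a := by rw [Equiv.Perm.inv_eq_iff_eq, h2a]
  have hwa : (u₁ * u₂⁻¹) a = a := by
    rw [Equiv.Perm.mul_apply, hinv_a, h1b]
  have hwb : (u₁ * u₂⁻¹) b = b := by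
    rw [Equiv.Perm.mul_apply, hinv_b, h1a]
  have := two_fix_eq_one hp hy hy' hwK hab hwa hwb
  exact mul_inv_eq_one.mp this
private lemma card_normalizer_swap_ge {a b : Fin n} (hab : a ≠ b) :
    2 * Nat.factorial (n - 2) ≤ Nat.card (Subgroup.normalizer (Subgroup.zpowers (Equiv.swap a b) : Set (Perm (Fin n)))) := by
  classical
  set p : Fin n → Prop := fun c => c ≠ a ∧ c ≠ b with hp_def
  have hpa : ¬ p a := by simp [hp_def]
  have hpb : ¬ p b := by simp [hp_def]
  have hfix : ∀ (σ : Equiv.Perm (Subtype p)) (c : Fin n), ¬ p c →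
      Equiv.Perm.ofSubtype σ c = c := fun σ c hc =>
    Equiv.Perm.ofSubtype_apply_of_not_mem σ hc
  have hcomm : ∀ σ : Equiv.Perm (Subtype p),
      Commute (Equiv.Perm.ofSubtype σ) (Equiv.swap a b) := by
    intro σ
    refine Equiv.ext fun c => ?_
    rw [Equiv.Perm.mul_apply, Equiv.Perm.mul_apply]
    by_cases hc : p c
    · rw [Equiv.swap_apply_of_ne_of_ne hc.1 hc.2,
        Equiv.Perm.ofSubtype_apply_of_mem σ hc]
      have hprop := (σ ⟨c, hc⟩).2
      rw [Equiv.swap_apply_of_ne_of_ne hprop.1 hprop.2]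
    · rw [hp_def, not_and_or, not_not, not_not] at hc
      rcases hc with rfl | rfl
      · rw [Equiv.swap_apply_left, hfix σ _ hpb, hfix σ _ hpa, Equiv.swap_apply_left]
      · rw [Equiv.swap_apply_right, hfix σ _ hpa, hfix σ _ hpb, Equiv.swap_apply_right]
  have hmem : ∀ (σ : Equiv.Perm (Subtype p)) (e : Bool),
      Equiv.Perm.ofSubtype σ * (if e then Equiv.swap a b else 1) ∈
        Subgroup.normalizer (Subgroup.zpowers (Equiv.swap a b) : Set _) := by
    intro σ e
    apply mem_normalizer_of_commute
    refine Commute.mul_left (hcomm σ) ?_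
    cases e
    · simpa using Commute.one_left (Equiv.swap a b)
    · simpa using Commute.refl (Equiv.swap a b)
  set F : Equiv.Perm (Subtype p) × Bool → (Subgroup.normalizer (Subgroup.zpowers (Equiv.swap a b) : Set _)) :=
    fun z => ⟨Equiv.Perm.ofSubtype z.1 * (if z.2 then Equiv.swap a b else 1), hmem z.1 z.2⟩
    with hF_def
  have heval : ∀ (σ : Equiv.Perm (Subtype p)) (e : Bool),
      (Equiv.Perm.ofSubtype σ * (if e then Equiv.swap a b else 1)) a
        = (if e then b else a) := by
    intro σ e
    cases e
    · simp only [if_neg Bool.false_ne_true, Bool.false_eq_true, if_false,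
        mul_one, hfix σ a hpa]
    · simp only [if_pos, Equiv.Perm.mul_apply, Equiv.swap_apply_left, hfix σ b hpb]
  have hinj : Function.Injective F := by
    rintro ⟨σ₁, e₁⟩ ⟨σ₂, e₂⟩ h
    rw [hF_def, Subtype.mk.injEq] at h
    have he : e₁ = e₂ := by
      have h1 := congrArg (fun π : Equiv.Perm (Fin n) => π a) h
      simp only [heval] at h1
      cases e₁ <;> cases e₂ <;> simp_all
    subst he
    have hσ : Equiv.Perm.ofSubtype σ₁ = Equiv.Perm.ofSubtype σ₂ := by
      exact mul_right_cancel h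
    have : σ₁ = σ₂ := by
      refine Equiv.ext fun c => ?_
      have h2 := congrArg (fun π : Equiv.Perm (Fin n) => π c.1) hσ
      simp only [Equiv.Perm.ofSubtype_apply_of_mem _ c.2] at h2
      exact Subtype.coe_injective (by simpa using h2)
    rw [this]
  have hcard : Nat.card (Equiv.Perm (Subtype p) × Bool) = Nat.factorial (n - 2) * 2 := by
    rw [Nat.card_eq_fintype_card, Fintype.card_prod, Fintype.card_bool, Fintype.card_perm]
    congr 2
    have : Fintype.card (Subtype p) = Fintype.card (Fin n) - Fintype.card {c : Fin n // ¬ p c} := by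
      rw [← Fintype.card_subtype_compl]
      apply Fintype.card_congr
      exact Equiv.subtypeEquivRight (by intro c; rw [not_not])
    rw [this, Fintype.card_fin]
    congr 1
    have h2 : ∀ c : Fin n, ¬ p c ↔ c ∈ ({a, b} : Finset (Fin n)) := by
      intro c
      simp [hp_def, not_and_or, or_comm]
      tauto
    rw [Fintype.card_subtype]
    rw [show Finset.filter (fun c => ¬ p c) Finset.univ = ({a, b} : Finset (Fin n)) by
      ext c; simp [h2 c]]
    exact Finset.card_pair hab
  calc 2 * Nat.factorial (n - 2) = Nat.card (Equiv.Perm (Subtype p) × Bool) := by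
        rw [hcard, mul_comm]
  _ ≤ _ := Nat.card_le_card_of_injective F hinj
private lemma card_normalizer_cycle_ge (hp : n.Prime) {y : Perm (Fin n)} (hy : y.IsCycle)
    (hy' : y.support.card = n) :
    (n - 1) * n ≤ Nat.card (Subgroup.normalizer (Subgroup.zpowers y : Set (Perm (Fin n)))) := by
  classical
  have hord := ord_eq hy hy'
  have hyK : y ∈ Subgroup.normalizer (Subgroup.zpowers y : Set _) :=
    Subgroup.le_normalizer (Subgroup.mem_zpowers y)
  have hconj : ∀ k : ℕ, 0 < k → k < n → ∃ c : Perm (Fin n),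
      c * y * c⁻¹ = y ^ k ∧ c ∈ Subgroup.normalizer (Subgroup.zpowers y : Set _) := by
    intro k hk0 hkn
    have hkcy : (y ^ k).IsCycle :=
      hy.isCycle_pow_pos_of_lt_prime_order (by rw [hord]; exact hp) k hk0 (by rw [hord]; exact hkn)
    have hcop : Nat.Coprime n k :=
      (Nat.Prime.coprime_iff_not_dvd hp).mpr (Nat.not_dvd_of_pos_of_lt hk0 hkn)
    have hsupk : (y ^ k).support = y.support :=
      Equiv.Perm.support_pow_coprime (by rw [hord]; exact hcop.symm)
    have hic : IsConj y (y ^ k) := hy.isConj hkcy (by rw [hsupk])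
    obtain ⟨c, hc⟩ := isConj_iff.mp hic
    refine ⟨c, hc, ?_⟩
    apply mem_normalizer_zpowers_of_conj
    · rw [hc]; exact Subgroup.pow_mem _ (Subgroup.mem_zpowers y) k
    · obtain ⟨s, t, hst⟩ := Nat.isCoprime_iff_coprime.mpr hcop.symm
      have hst' : (k : ℤ) * s + (n : ℤ) * t = 1 := by linarith
      have hyn : y ^ (n : ℤ) = 1 := by
        rw [zpow_natCast]
        exact orderOf_dvd_iff_pow_eq_one.mp (by rw [hord])
      have hy1 : y = (y ^ k) ^ (s : ℤ) := by
        calc y = y ^ ((k : ℤ) * s + (n : ℤ) * t) := by rw [hst', zpow_one]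
        _ = (y ^ (k:ℤ)) ^ s * (y ^ (n:ℤ)) ^ t := by rw [zpow_add, zpow_mul, zpow_mul]
        _ = (y ^ k) ^ (s : ℤ) := by rw [hyn, one_zpow, mul_one, zpow_natCast]
      have hck : c⁻¹ * (y ^ k) * c = y := by rw [← hc]; group
      have : c⁻¹ * y * c = y ^ s := by
        conv_lhs => rw [hy1]
        rw [show c⁻¹ * (y ^ k) ^ (s:ℤ) * c = (c⁻¹ * (y ^ k) * c⁻¹⁻¹) ^ (s:ℤ) by
          rw [conj_zpow, inv_inv], inv_inv, hck]
      rw [this]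
      exact ⟨s, rfl⟩
  choose u hu1 hu2 using hconj
  set U : ℕ → Perm (Fin n) := fun k =>
    if h : 0 < k ∧ k < n then u k h.1 h.2 else 1 with hU_def
  have hn2 : 2 ≤ n := hp.two_le
  have hUa : ∀ k : ℕ, 0 < k → k < n → U k * y * (U k)⁻¹ = y ^ k := by
    intro k h1 h2
    rw [hU_def]
    simp only [dif_pos (And.intro h1 h2)]
    exact hu1 k h1 h2
  have hUK : ∀ k : ℕ, 0 < k → k < n → U k ∈ Subgroup.normalizer (Subgroup.zpowers y : Set _) := by
    intro k h1 h2
    rw [hU_def]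
    simp only [dif_pos (And.intro h1 h2)]
    exact hu2 k h1 h2
  set f : Fin (n - 1) × Fin n → (Subgroup.normalizer (Subgroup.zpowers y : Set _)) := fun z =>
    ⟨y ^ (z.2 : ℕ) * U ((z.1 : ℕ) + 1),
      mul_mem (Subgroup.pow_mem _ hyK _)
        (hUK _ (Nat.succ_pos _) (by omega))⟩ with hf_def
  have hinj : Function.Injective f := by
    rintro ⟨k₁, j₁⟩ ⟨k₂, j₂⟩ h
    rw [hf_def, Subtype.mk.injEq] at h
    have hk1n : (k₁ : ℕ) + 1 < n := by omega
    have hk2n : (k₂ : ℕ) + 1 < n := by omega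
    set c₁ := U ((k₁ : ℕ) + 1)
    set c₂ := U ((k₂ : ℕ) + 1)
    have hc₁ : c₁ * y * c₁⁻¹ = y ^ ((k₁ : ℕ) + 1) := hUa _ (by omega) hk1n
    have hc₂ : c₂ * y * c₂⁻¹ = y ^ ((k₂ : ℕ) + 1) := hUa _ (by omega) hk2n
    -- c₁ = y ^ d * c₂ with d = j₂ - j₁
    have hd : c₁ = y ^ ((j₂ : ℤ) - (j₁ : ℤ)) * c₂ := by
      have h' : y ^ ((j₁ : ℕ)) * c₁ = y ^ ((j₂ : ℕ)) * c₂ := h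
      calc c₁ = (y ^ ((j₁:ℕ)))⁻¹ * (y ^ ((j₁:ℕ)) * c₁) := by group
      _ = (y ^ ((j₁:ℕ)))⁻¹ * (y ^ ((j₂:ℕ)) * c₂) := by rw [h']
      _ = y ^ ((j₂ : ℤ) - (j₁ : ℤ)) * c₂ := by
          rw [zpow_sub, ← zpow_natCast y (j₁:ℕ), ← zpow_natCast y (j₂:ℕ)]
          group
    have hkeq : y ^ ((k₁ : ℕ) + 1) = y ^ ((k₂ : ℕ) + 1) := by
      rw [← hc₁, hd]
      calc (y ^ ((j₂:ℤ) - j₁) * c₂) * y * (y ^ ((j₂:ℤ) - j₁) * c₂)⁻¹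
          = y ^ ((j₂:ℤ) - j₁) * (c₂ * y * c₂⁻¹) * (y ^ ((j₂:ℤ) - j₁))⁻¹ := by group
      _ = y ^ ((j₂:ℤ) - j₁) * y ^ ((k₂:ℕ) + 1) * (y ^ ((j₂:ℤ) - j₁))⁻¹ := by rw [hc₂]
      _ = y ^ ((k₂ : ℕ) + 1) := by
          rw [← zpow_natCast y ((k₂:ℕ) + 1)]
          rw [← zpow_add, ← zpow_sub]
          congr 1
          ring
    have hk : (k₁ : ℕ) = (k₂ : ℕ) := by
      have := pow_injOn_Iio_orderOf (x := y) (by rw [hord]; exact Set.mem_Iio.mpr hk1n)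
        (by rw [hord]; exact Set.mem_Iio.mpr hk2n) hkeq
      omega
    have hceq : c₁ = c₂ := by
      show U ((k₁ : ℕ) + 1) = U ((k₂ : ℕ) + 1)
      rw [hk]
    have hj : (j₁ : ℕ) = (j₂ : ℕ) := by
      have h' : y ^ ((j₁ : ℕ)) * c₁ = y ^ ((j₂ : ℕ)) * c₂ := h
      rw [hceq] at h'
      have h'' := mul_right_cancel h'
      exact pow_injOn_Iio_orderOf (x := y) (by rw [hord]; exact Set.mem_Iio.mpr j₁.2)
        (by rw [hord]; exact Set.mem_Iio.mpr j₂.2) h''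
    exact Prod.ext (Fin.ext hk) (Fin.ext hj)
  calc (n - 1) * n = Nat.card (Fin (n - 1) × Fin n) := by simp
  _ ≤ _ := Nat.card_le_card_of_injective f hinj
/-- For a prime `n ≥ 5`, if `x` is a transposition and `y` an `n`-cycle in `Sym(n)`, then
`Sym(n) = N(⟨x⟩) N(⟨y⟩)`. -/
theorem stmt_6 (n : ℕ) (hn : 5 ≤ n) (hp : n.Prime) (x y : Equiv.Perm (Fin n))
    (hx : x.IsSwap) (hy : y.IsCycle) (hy' : y.support.card = n) :
    ∀ g : Equiv.Perm (Fin n), ∃ u ∈ Subgroup.normalizer (Subgroup.zpowers x : Set (Equiv.Perm (Fin n))),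
      ∃ v ∈ Subgroup.normalizer (Subgroup.zpowers y : Set (Equiv.Perm (Fin n))), g = u * v := by
  classical
  obtain ⟨a, b, hab, hxeq⟩ := hx
  subst hxeq
  set H := Subgroup.normalizer (Subgroup.zpowers (Equiv.swap a b) : Set (Perm (Fin n))) with hH
  set K := Subgroup.normalizer (Subgroup.zpowers y : Set (Perm (Fin n))) with hKdef
  obtain ⟨m, hm⟩ : ∃ m, n = m + 2 := ⟨n - 2, by omega⟩
  have hcardG : Nat.card (Equiv.Perm (Fin n)) = (m + 2) * ((m + 1) * Nat.factorial m) := by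
    rw [Nat.card_eq_fintype_card, Fintype.card_perm, Fintype.card_fin, hm,
      show m + 2 = (m + 1) + 1 from rfl, Nat.factorial_succ, Nat.factorial_succ]
  have hcardH : 2 * Nat.factorial m ≤ Nat.card H := by
    have h := card_normalizer_swap_ge hab
    rwa [show n - 2 = m by omega] at h
  have hcardK : (m + 1) * (m + 2) ≤ Nat.card K := by
    have h := card_normalizer_cycle_ge hp hy hy'
    calc (m + 1) * (m + 2) = (n - 1) * n := by
          rw [show n - 1 = m + 1 by omega, ← hm]
    _ ≤ Nat.card K := h
  have hidx : H.index * Nat.card H = (m + 2) * ((m + 1) * Nat.factorial m) := by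
    rw [Subgroup.index_mul_card, hcardG]
  have hidx2 : H.index * 2 ≤ (m + 2) * (m + 1) := by
    have h1 : H.index * (2 * Nat.factorial m) ≤ H.index * Nat.card H :=
      Nat.mul_le_mul_left _ hcardH
    rw [hidx] at h1
    have h2 : (H.index * 2) * Nat.factorial m ≤ ((m + 2) * (m + 1)) * Nat.factorial m := by
      calc (H.index * 2) * Nat.factorial m = H.index * (2 * Nat.factorial m) := by ring
      _ ≤ (m + 2) * ((m + 1) * Nat.factorial m) := h1
      _ = ((m + 2) * (m + 1)) * Nat.factorial m := by ring
    exact Nat.le_of_mul_le_mul_right h2 (Nat.factorial_pos m)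
  set b₀ : Equiv.Perm (Fin n) ⧸ H := ((1 : Equiv.Perm (Fin n)) : Equiv.Perm (Fin n) ⧸ H)
    with hb₀
  have hsmul : ∀ (k : ↥K) (g : Equiv.Perm (Fin n)),
      k • ((g : Equiv.Perm (Fin n)) : Equiv.Perm (Fin n) ⧸ H)
        = (((k : Equiv.Perm (Fin n)) * g : Equiv.Perm (Fin n)) : Equiv.Perm (Fin n) ⧸ H) :=
    fun k g => rfl
  have hstabH : ∀ s : MulAction.stabilizer ↥K b₀, ((s : ↥K) : Equiv.Perm (Fin n)) ∈ H := by
    intro s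
    have h1 : (s : ↥K) • b₀ = b₀ := s.2
    have h1' : ((((s : ↥K) : Equiv.Perm (Fin n)) * 1 : Equiv.Perm (Fin n))
        : Equiv.Perm (Fin n) ⧸ H) = ((1 : Equiv.Perm (Fin n)) : Equiv.Perm (Fin n) ⧸ H) :=
      (hsmul (s : ↥K) 1).symm.trans h1
    have h2 := QuotientGroup.eq.mp h1'
    simp only [mul_one, mul_inv_rev] at h2
    exact inv_mem_iff.mp (by simpa using h2)
  have hstab : Nat.card (MulAction.stabilizer ↥K b₀) ≤ 2 := by
    have hinj : Function.Injective
        (fun s : MulAction.stabilizer ↥K b₀ =>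
          decide (((s : ↥K) : Equiv.Perm (Fin n)) = 1)) := by
      intro s₁ s₂ hs
      have hs' : ((((s₁ : ↥K) : Equiv.Perm (Fin n))) = 1)
          ↔ ((((s₂ : ↥K) : Equiv.Perm (Fin n))) = 1) := by
        simpa using hs
      have hcase : ∀ s : MulAction.stabilizer ↥K b₀,
          ((s : ↥K) : Equiv.Perm (Fin n)) ∈ K := fun s => (s : ↥K).2
      by_cases h1 : ((s₁ : ↥K) : Equiv.Perm (Fin n)) = 1
      · have h2 : ((s₂ : ↥K) : Equiv.Perm (Fin n)) = 1 := hs'.mp h1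
        exact Subtype.ext (Subtype.ext (h1.trans h2.symm))
      · have h2 : ((s₂ : ↥K) : Equiv.Perm (Fin n)) ≠ 1 := fun h => h1 (hs'.mpr h)
        exact Subtype.ext (Subtype.ext
          (inter_eq hp hy hy' hab (hstabH s₁) (hcase s₁) (hstabH s₂) (hcase s₂) h1 h2))
    calc Nat.card (MulAction.stabilizer ↥K b₀)
        ≤ Nat.card Bool := Nat.card_le_card_of_injective _ hinj
    _ = 2 := by simp
  have horb : Nat.card (MulAction.orbit ↥K b₀) * Nat.card (MulAction.stabilizer ↥K b₀)
      = Nat.card ↥K :=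
    (Nat.card_prod _ _).symm.trans
      (Nat.card_congr (MulAction.orbitProdStabilizerEquivGroup ↥K b₀))
  have horb_ge : (m + 2) * (m + 1) ≤ Nat.card (MulAction.orbit ↥K b₀) * 2 := by
    calc (m + 2) * (m + 1) = (m + 1) * (m + 2) := by ring
    _ ≤ Nat.card ↥K := hcardK
    _ = Nat.card (MulAction.orbit ↥K b₀) * Nat.card (MulAction.stabilizer ↥K b₀) := horb.symm
    _ ≤ Nat.card (MulAction.orbit ↥K b₀) * 2 := Nat.mul_le_mul_left _ hstab
  have hidx_le : H.index ≤ Nat.card (MulAction.orbit ↥K b₀) :=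
    Nat.le_of_mul_le_mul_right (le_trans hidx2 horb_ge) (by norm_num)
  have hle2 : Nat.card (MulAction.orbit ↥K b₀) ≤ Nat.card (Equiv.Perm (Fin n) ⧸ H) :=
    Nat.card_le_card_of_injective _ Subtype.val_injective
  have horbcard : Nat.card (MulAction.orbit ↥K b₀) = Nat.card (Equiv.Perm (Fin n) ⧸ H) :=
    le_antisymm hle2 (by rw [← Subgroup.index_eq_card]; exact hidx_le)
  have horb_univ : MulAction.orbit ↥K b₀ = Set.univ := by
    apply Set.eq_of_subset_of_ncard_le (Set.subset_univ _)
    rw [Set.ncard_univ, ← Nat.card_coe_set_eq, horbcard]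
  intro g
  have hg : ((g⁻¹ : Equiv.Perm (Fin n)) : Equiv.Perm (Fin n) ⧸ H)
      ∈ MulAction.orbit ↥K b₀ := by rw [horb_univ]; trivial
  obtain ⟨k, hk⟩ := hg
  simp only at hk
  have hk2 : (((k : Equiv.Perm (Fin n)) * 1 : Equiv.Perm (Fin n))
      : Equiv.Perm (Fin n) ⧸ H) = ((g⁻¹ : Equiv.Perm (Fin n)) : Equiv.Perm (Fin n) ⧸ H) :=
    (hsmul k 1).symm.trans hk
  rw [mul_one] at hk2
  have hmem : ((k : Equiv.Perm (Fin n)))⁻¹ * g⁻¹ ∈ H := QuotientGroup.eq.mp hk2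
  refine ⟨(((k : Equiv.Perm (Fin n)))⁻¹ * g⁻¹)⁻¹, inv_mem hmem,
    ((k : Equiv.Perm (Fin n)))⁻¹, inv_mem k.2, ?_⟩
  group
end

section
/- Let n ≥ 5. There do not exist non-identity permutations x, y ∈ Sym(n) such that every element of Sym(n) is a product u·v with u ∈ C_{Sym(n)}(x) and v ∈ C_{Sym(n)}(y). -/
open Equiv Finset

theorem Equiv.Perm.inv_apply_self {α : Type*} (f : Equiv.Perm α) (x : α) : f⁻¹ (f x) = x :=
  Equiv.Perm.inv_eq_iff_eq.mpr rfl

theorem Equiv.Perm.apply_inv_self {α : Type*} (f : Equiv.Perm α) (x : α) : f (f⁻¹ x) = x :=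
  (Equiv.eq_symm_apply f).mp rfl


private lemma perm_eq_one_of_fix' {n : ℕ} {x : Equiv.Perm (Fin n)} (h : ∀ p, x p = p) : x = 1 :=
  Equiv.ext fun p => (h p).trans (Equiv.Perm.one_apply p).symm

private lemma exists_map_two' {α : Type*} [DecidableEq α] {a b c d : α} (hab : a ≠ b) (hcd : c ≠ d) :
    ∃ g : Equiv.Perm α, g a = c ∧ g b = d := by
  refine ⟨Equiv.swap (Equiv.swap a c b) d * Equiv.swap a c, ?_, ?_⟩
  · have h2 : Equiv.swap a c b ≠ c := by
      intro h
      exact hab ((Equiv.swap a c).injective (by rw [h, Equiv.swap_apply_left])).symm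
    simp only [Equiv.Perm.mul_apply, Equiv.swap_apply_left]
    exact Equiv.swap_apply_of_ne_of_ne (Ne.symm h2) hcd
  · simp only [Equiv.Perm.mul_apply]
    exact Equiv.swap_apply_left _ _

private lemma swap_mul_keep {α : Type*} [DecidableEq α] (g : Equiv.Perm α) (s t u : α) (h1 : g u ≠ s) (h2 : g u ≠ t) :
    (Equiv.swap s t * g) u = g u := by
  simp [Equiv.Perm.mul_apply, Equiv.swap_apply_of_ne_of_ne h1 h2]

private lemma exists_map_four {α : Type*} [DecidableEq α] {a b c d A B C D : α}
    (hab : a ≠ b) (hac : a ≠ c) (had : a ≠ d) (hbc : b ≠ c) (hbd : b ≠ d) (hcd : c ≠ d)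
    (hAB : A ≠ B) (hAC : A ≠ C) (hAD : A ≠ D) (hBC : B ≠ C) (hBD : B ≠ D) (hCD : C ≠ D) :
    ∃ g : Equiv.Perm α, g a = A ∧ g b = B ∧ g c = C ∧ g d = D := by
  set g1 : Equiv.Perm α := Equiv.swap a A with hg1
  have e1a : g1 a = A := Equiv.swap_apply_left a A
  set g2 : Equiv.Perm α := Equiv.swap (g1 b) B * g1 with hg2
  have e2a : g2 a = A := by
    rw [hg2, swap_mul_keep _ _ _ _ (fun h => hab (g1.injective h)) (by rw [e1a]; exact hAB)]
    exact e1a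
  have e2b : g2 b = B := by rw [hg2]; exact Equiv.swap_apply_left _ _
  set g3 : Equiv.Perm α := Equiv.swap (g2 c) C * g2 with hg3
  have e3a : g3 a = A := by
    rw [hg3, swap_mul_keep _ _ _ _ (fun h => hac (g2.injective h)) (by rw [e2a]; exact hAC)]
    exact e2a
  have e3b : g3 b = B := by
    rw [hg3, swap_mul_keep _ _ _ _ (fun h => hbc (g2.injective h)) (by rw [e2b]; exact hBC)]
    exact e2b
  have e3c : g3 c = C := by rw [hg3]; exact Equiv.swap_apply_left _ _
  set g4 : Equiv.Perm α := Equiv.swap (g3 d) D * g3 with hg4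
  refine ⟨g4, ?_, ?_, ?_, ?_⟩
  · rw [hg4, swap_mul_keep _ _ _ _ (fun h => had (g3.injective h)) (by rw [e3a]; exact hAD)]
    exact e3a
  · rw [hg4, swap_mul_keep _ _ _ _ (fun h => hbd (g3.injective h)) (by rw [e3b]; exact hBD)]
    exact e3b
  · rw [hg4, swap_mul_keep _ _ _ _ (fun h => hcd (g3.injective h)) (by rw [e3c]; exact hCD)]
    exact e3c
  · rw [hg4]; exact Equiv.swap_apply_left _ _

private lemma exists_two_transitions {α : Type*} [DecidableEq α] [Fintype α] (z : Equiv.Perm α)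
    (hz : 4 ≤ #(univ.filter fun p => z p ≠ p)) :
    ∃ a b c d : α, z a = b ∧ z c = d ∧
      a ≠ b ∧ a ≠ c ∧ a ≠ d ∧ b ≠ c ∧ b ≠ d ∧ c ≠ d := by
  set S := univ.filter fun p => z p ≠ p with hS
  have hmem : ∀ p, p ∈ S ↔ z p ≠ p := by intro p; simp [hS]
  obtain ⟨a, ha⟩ : S.Nonempty := card_pos.mp (by omega)
  have hza : z a ≠ a := (hmem a).mp ha
  set b := z a with hb
  have hcard : 1 ≤ #(((S.erase a).erase b).erase (z.symm a)) := by
    have e1 : #S - 1 ≤ #(S.erase a) := pred_card_le_card_erase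
    have e2 : #(S.erase a) - 1 ≤ #((S.erase a).erase b) := pred_card_le_card_erase
    have e3 : #((S.erase a).erase b) - 1 ≤ #(((S.erase a).erase b).erase (z.symm a)) :=
      pred_card_le_card_erase
    omega
  obtain ⟨c, hc⟩ : (((S.erase a).erase b).erase (z.symm a)).Nonempty := card_pos.mp hcard
  have hc1 : c ≠ z.symm a := (mem_erase.mp hc).1
  have hc2 : c ≠ b := (mem_erase.mp (mem_erase.mp hc).2).1
  have hc3 : c ≠ a := (mem_erase.mp (mem_erase.mp (mem_erase.mp hc).2).2).1
  have hcS : c ∈ S := (mem_erase.mp (mem_erase.mp (mem_erase.mp hc).2).2).2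
  have hzc : z c ≠ c := (hmem c).mp hcS
  refine ⟨a, b, c, z c, rfl, rfl, Ne.symm hza, Ne.symm hc3, ?_, Ne.symm hc2, ?_, Ne.symm hzc⟩
  · intro h; exact hc1 (by rw [h]; simp)
  · intro h; exact hc3 (z.injective h.symm)

private lemma caseD {n : ℕ} (hn : 5 ≤ n) {x y : Equiv.Perm (Fin n)} (hy : y ≠ 1)
    (hkey : ∀ g : Equiv.Perm (Fin n), ∃ u, x * u = u * x ∧ g * y * g⁻¹ = u * y * u⁻¹)
    (hfpf : ∀ p, x p ≠ p) : False := by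
  classical
  set A : Equiv.Perm (Fin n) → ℕ :=
    fun g => #(univ.filter fun p => (g * y * g⁻¹) p = x p) with hA
  have hconst : ∀ g, A g = A 1 := by
    intro g
    obtain ⟨u, hux, hconj⟩ := hkey g
    have hxu : ∀ i, x (u i) = u (x i) := fun i => by
      rw [← Equiv.Perm.mul_apply, ← Equiv.Perm.mul_apply, hux]
    simp only [hA]
    rw [hconj]
    simp only [one_mul, inv_one, mul_one]
    refine (Finset.card_equiv u fun i => ?_).symm
    simp only [mem_filter, mem_univ, true_and]
    simp only [Equiv.Perm.mul_apply,
      Equiv.Perm.inv_apply_self]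
    constructor
    · intro h; rw [h, hxu]
    · intro h; rw [hxu] at h; exact u.injective h
  set t : ℕ := #(univ.filter fun a : Fin n => ¬ y a = a) with ht
  -- per-point counting
  have hNp : ∀ p : Fin n,
      (n * n - n) * #(univ.filter fun g : Equiv.Perm (Fin n) => (g * y * g⁻¹) p = x p)
        = t * n.factorial := by
    intro p
    have hpq : p ≠ x p := fun h => hfpf p h.symm
    set Fib : Fin n → Fin n → Finset (Equiv.Perm (Fin n)) :=
      fun a b => univ.filter fun h => h p = a ∧ h (x p) = b with hFib
    set K := #(Fib p (x p)) with hK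
    have hfib : ∀ a b : Fin n, a ≠ b → #(Fib a b) = K := by
      intro a b hab
      obtain ⟨σ, hσ1, hσ2⟩ := exists_map_two' hpq hab
      rw [hK]
      refine Finset.card_equiv (Equiv.mulLeft σ⁻¹) fun i => ?_
      simp only [hFib, mem_filter, mem_univ, true_and, Equiv.coe_mulLeft,
        Equiv.Perm.mul_apply]
      constructor
      · rintro ⟨h1, h2⟩
        constructor
        · rw [h1, ← hσ1, Equiv.Perm.inv_apply_self]
        · rw [h2, ← hσ2, Equiv.Perm.inv_apply_self]
      · rintro ⟨h1, h2⟩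
        constructor
        · have := congrArg σ h1
          rw [Equiv.Perm.apply_inv_self, hσ1] at this
          exact this
        · have := congrArg σ h2
          rw [Equiv.Perm.apply_inv_self, hσ2] at this
          exact this
    have htotal : n.factorial = (n * n - n) * K := by
      have h0 : #(univ : Finset (Equiv.Perm (Fin n))) = n.factorial := by
        rw [card_univ, Fintype.card_perm, Fintype.card_fin]
      have h1 : #(univ : Finset (Equiv.Perm (Fin n))) =
          ∑ ab ∈ (univ : Finset (Fin n)).offDiag,
            #(univ.filter fun h : Equiv.Perm (Fin n) => (h p, h (x p)) = ab) := by
        refine Finset.card_eq_sum_card_fiberwise fun h _ => ?_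
        rw [Finset.mem_coe, Finset.mem_offDiag]
        exact ⟨mem_univ _, mem_univ _, fun hcontra => hpq (h.injective hcontra)⟩
      have h2 : ∀ ab ∈ (univ : Finset (Fin n)).offDiag,
          #(univ.filter fun h : Equiv.Perm (Fin n) => (h p, h (x p)) = ab) = K := by
        intro ab hab
        have he : (univ.filter fun h : Equiv.Perm (Fin n) => (h p, h (x p)) = ab)
            = Fib ab.1 ab.2 := by
          rw [hFib]
          apply Finset.filter_congr
          intro h _
          simp only [Prod.ext_iff]
        rw [he]
        exact hfib ab.1 ab.2 (Finset.mem_offDiag.mp hab).2.2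
      calc n.factorial = #(univ : Finset (Equiv.Perm (Fin n))) := h0.symm
        _ = ∑ ab ∈ (univ : Finset (Fin n)).offDiag,
            #(univ.filter fun h : Equiv.Perm (Fin n) => (h p, h (x p)) = ab) := h1
        _ = ∑ _ab ∈ (univ : Finset (Fin n)).offDiag, K := Finset.sum_congr rfl h2
        _ = #((univ : Finset (Fin n)).offDiag) * K := by rw [Finset.sum_const, smul_eq_mul]
        _ = (n * n - n) * K := by rw [Finset.offDiag_card, card_univ, Fintype.card_fin]
    have hNp1 : #(univ.filter fun g : Equiv.Perm (Fin n) => (g * y * g⁻¹) p = x p)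
        = #(univ.filter fun h : Equiv.Perm (Fin n) => y (h p) = h (x p)) := by
      refine Finset.card_nbij' (fun g => g⁻¹) (fun g => g⁻¹) ?_ ?_ ?_ ?_
      · intro g hg
        simp only [mem_coe, mem_filter, mem_univ, true_and] at hg ⊢
        simp only [Equiv.Perm.mul_apply] at hg ⊢
        rw [← hg, Equiv.Perm.inv_apply_self]
      · intro g hg
        simp only [mem_coe, mem_filter, mem_univ, true_and] at hg ⊢
        simp only [Equiv.Perm.mul_apply] at hg ⊢
        simp only [inv_inv]
        rw [hg, Equiv.Perm.inv_apply_self]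
      · intro g _; simp
      · intro g _; simp
    have hNp2 : #(univ.filter fun h : Equiv.Perm (Fin n) => y (h p) = h (x p))
        = ∑ a : Fin n, #(univ.filter fun h : Equiv.Perm (Fin n) =>
            (y (h p) = h (x p)) ∧ h p = a) := by
      rw [Finset.card_eq_sum_card_fiberwise
        (f := fun h : Equiv.Perm (Fin n) => h p) (t := univ) (fun _ _ => mem_univ _)]
      refine Finset.sum_congr rfl fun a _ => ?_
      rw [Finset.filter_filter]
    have hNp3 : ∀ a : Fin n, #(univ.filter fun h : Equiv.Perm (Fin n) =>
        (y (h p) = h (x p)) ∧ h p = a) = if y a = a then 0 else K := by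
      intro a
      by_cases hya : y a = a
      · rw [if_pos hya, Finset.card_eq_zero, Finset.filter_eq_empty_iff]
        rintro h - ⟨h1, h2⟩
        rw [h2, hya, ← h2] at h1
        exact hpq (h.injective h1)
      · rw [if_neg hya, ← hfib a (y a) (fun h => hya h.symm)]
        congr 1
        apply Finset.filter_congr
        intro h _
        constructor
        · rintro ⟨h1, h2⟩
          exact ⟨h2, by rw [← h1, h2]⟩
        · rintro ⟨h1, h2⟩
          exact ⟨by rw [h1, h2], h1⟩
    have hsum3 : ∑ a : Fin n, (if y a = a then 0 else K) = t * K := by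
      rw [Finset.sum_ite, Finset.sum_const, Finset.sum_const, smul_eq_mul, smul_eq_mul,
        mul_zero, zero_add, ht]
    calc (n * n - n) * #(univ.filter fun g : Equiv.Perm (Fin n) => (g * y * g⁻¹) p = x p)
        = (n * n - n) * (t * K) := by
          rw [hNp1, hNp2, Finset.sum_congr rfl (fun a _ => hNp3 a), hsum3]
      _ = t * ((n * n - n) * K) := by ring
      _ = t * n.factorial := by rw [← htotal]
  -- global double counting
  have hsum1 : ∑ g : Equiv.Perm (Fin n), A g = n.factorial * A 1 := by
    rw [Finset.sum_congr rfl (fun g _ => hconst g), Finset.sum_const, smul_eq_mul,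
      card_univ, Fintype.card_perm, Fintype.card_fin]
  have hsum2 : ∑ g : Equiv.Perm (Fin n), A g
      = ∑ p : Fin n, #(univ.filter fun g : Equiv.Perm (Fin n) => (g * y * g⁻¹) p = x p) := by
    simp only [hA, Finset.card_filter]
    exact Finset.sum_comm
  have hmain : (n * n - n) * (n.factorial * A 1) = n * (t * n.factorial) := by
    calc (n * n - n) * (n.factorial * A 1)
        = (n * n - n) * ∑ p : Fin n,
            #(univ.filter fun g : Equiv.Perm (Fin n) => (g * y * g⁻¹) p = x p) := by
          rw [← hsum2, hsum1]
      _ = ∑ p : Fin n, (n * n - n) *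
            #(univ.filter fun g : Equiv.Perm (Fin n) => (g * y * g⁻¹) p = x p) := by
          rw [Finset.mul_sum]
      _ = ∑ _p : Fin n, t * n.factorial := Finset.sum_congr rfl fun p _ => hNp p
      _ = n * (t * n.factorial) := by
          rw [Finset.sum_const, smul_eq_mul, card_univ, Fintype.card_fin]
  have hcancel : (n * n - n) * A 1 = n * t := by
    have hfac : 0 < n.factorial := Nat.factorial_pos n
    have h1 : ((n * n - n) * A 1) * n.factorial = (n * t) * n.factorial := by
      calc ((n * n - n) * A 1) * n.factorial = (n * n - n) * (n.factorial * A 1) := by ring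
        _ = n * (t * n.factorial) := hmain
        _ = (n * t) * n.factorial := by ring
    exact Nat.eq_of_mul_eq_mul_right hfac h1
  -- A 1 ≥ 1
  have hA1ge : 1 ≤ A 1 := by
    obtain ⟨a, hya⟩ : ∃ a, y a ≠ a := by
      by_contra hcon
      push_neg at hcon
      exact hy (perm_eq_one_of_fix' hcon)
    have h5 : (0:ℕ) < n := by omega
    set p0 : Fin n := ⟨0, h5⟩ with hp0
    obtain ⟨g, hg1, hg2⟩ := exists_map_two'
      (show a ≠ y a from fun h => hya h.symm)
      (show p0 ≠ x p0 from fun h => hfpf p0 h.symm)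
    rw [← hconst g]
    refine Finset.card_pos.mpr ⟨p0, ?_⟩
    simp only [hA, mem_filter, mem_univ, true_and]
    simp only [Equiv.Perm.mul_apply]
    have hinv : g⁻¹ p0 = a := by rw [← hg1, Equiv.Perm.inv_apply_self]
    rw [hinv, hg2]
  -- t ≤ n
  have ht_le : t ≤ n := by
    rw [ht]
    calc #(univ.filter fun a : Fin n => ¬ y a = a) ≤ #(univ : Finset (Fin n)) :=
          Finset.card_filter_le _ _
      _ = n := by rw [card_univ, Fintype.card_fin]
  -- deduce A 1 = 1 and t = n - 1
  have hnn : n * n - n = n * (n - 1) := by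
    cases n with
    | zero => simp
    | succ m =>
      have hcalc : (m+1)*(m+1) = (m+1)*m + (m+1) := by ring
      rw [Nat.succ_sub_one]
      omega
  have hc2 : (n - 1) * A 1 = t := by
    rw [hnn, mul_assoc] at hcancel
    exact Nat.eq_of_mul_eq_mul_left (by omega) hcancel
  have hA1 : A 1 = 1 := by
    by_contra hne
    have h2 : 2 ≤ A 1 := by omega
    have h3 : (n - 1) * 2 ≤ (n - 1) * A 1 := Nat.mul_le_mul_left _ h2
    omega
  have htval : t = n - 1 := by rw [hA1, mul_one] at hc2; omega
  have hty : 4 ≤ #(univ.filter fun p : Fin n => y p ≠ p) := by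
    have heq : #(univ.filter fun p : Fin n => y p ≠ p) = t := by
      rw [ht]
    omega
  obtain ⟨a, b, c, d, hyab, hycd, dab, dac, dad, dbc, dbd, dcd⟩ :=
    exists_two_transitions y hty
  have htx : 4 ≤ #(univ.filter fun p : Fin n => x p ≠ p) := by
    rw [Finset.filter_true_of_mem (fun p _ => hfpf p), card_univ, Fintype.card_fin]
    omega
  obtain ⟨al, be, ga, de, hxab, hxcd, eab, eac, ead, ebc, ebd, ecd⟩ :=
    exists_two_transitions x htx
  obtain ⟨g, hga, hgb, hgc, hgd⟩ :=
    exists_map_four dab dac dad dbc dbd dcd eab eac ead ebc ebd ecd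
  have hmema : al ∈ univ.filter fun p => (g * y * g⁻¹) p = x p := by
    simp only [mem_filter, mem_univ, true_and]
    simp only [Equiv.Perm.mul_apply]
    have hinv : g⁻¹ al = a := by rw [← hga, Equiv.Perm.inv_apply_self]
    rw [hinv, hyab, hgb, ← hxab]
  have hmemg : ga ∈ univ.filter fun p => (g * y * g⁻¹) p = x p := by
    simp only [mem_filter, mem_univ, true_and]
    simp only [Equiv.Perm.mul_apply]
    have hinv : g⁻¹ ga = c := by rw [← hgc, Equiv.Perm.inv_apply_self]
    rw [hinv, hycd, hgd, ← hxcd]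
  have h2le : 2 ≤ A g := by
    have hss : ({al, ga} : Finset (Fin n)) ⊆ univ.filter fun p => (g * y * g⁻¹) p = x p := by
      intro w hw
      rcases Finset.mem_insert.mp hw with h | h
      · exact h ▸ hmema
      · rw [Finset.mem_singleton.mp h]; exact hmemg
    calc 2 = #({al, ga} : Finset (Fin n)) := (Finset.card_pair eac).symm
      _ ≤ _ := Finset.card_le_card hss
  rw [hconst g, hA1] at h2le
  omega

private lemma caseC {n : ℕ} {x y : Equiv.Perm (Fin n)} (hx : x ≠ 1) (hy : y ≠ 1)
    (hkey : ∀ g : Equiv.Perm (Fin n), ∃ u, x * u = u * x ∧ g * y * g⁻¹ = u * y * u⁻¹)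
    (hfx : ∃ p, x p = p) (hfy : ∃ q, y q = q) : False := by
  classical
  set c : Equiv.Perm (Fin n) → ℕ :=
    fun g => #(univ.filter fun p => (g * y * g⁻¹) p = p ∧ x p = p) with hc
  have hconst : ∀ g, c g = c 1 := by
    intro g
    obtain ⟨u, hux, hconj⟩ := hkey g
    have hxu : ∀ i, x (u i) = u (x i) := fun i => by
      rw [← Equiv.Perm.mul_apply, ← Equiv.Perm.mul_apply, hux]
    simp only [hc]
    rw [hconj]
    simp only [one_mul, inv_one, mul_one]
    refine (Finset.card_equiv u fun i => ?_).symm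
    simp only [mem_filter, mem_univ, true_and]
    simp only [Equiv.Perm.mul_apply,
      Equiv.Perm.inv_apply_self]
    constructor
    · rintro ⟨h1', h2'⟩; exact ⟨by rw [h1'], by rw [hxu, h2']⟩
    · rintro ⟨h1', h2'⟩
      exact ⟨u.injective h1', u.injective (by rw [← hxu, h2'])⟩
  obtain ⟨f, hf⟩ := hfx
  obtain ⟨e, he⟩ := hfy
  set g₀ : Equiv.Perm (Fin n) := Equiv.swap e f with hg₀
  set z : Equiv.Perm (Fin n) := g₀ * y * g₀⁻¹ with hz
  have hzf : z f = f := by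
    rw [hz]
    simp only [Equiv.Perm.mul_apply]
    rw [hg₀, Equiv.swap_inv]
    rw [Equiv.swap_apply_right, he, Equiv.swap_apply_left]
  set T1 : Finset (Fin n) := univ.filter fun q => z q = q ∧ x q = q with hT1
  have hfT1 : f ∈ T1 := by rw [hT1]; simp [hzf, hf]
  have hm : c g₀ = #T1 := by rw [hc, hT1, hz]
  have hcw : ∀ w : Equiv.Perm (Fin n),
      c (w * g₀) = #(univ.filter fun q => z q = q ∧ x (w q) = w q) := by
    intro w
    have hrw : (w * g₀) * y * (w * g₀)⁻¹ = w * z * w⁻¹ := by rw [hz]; group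
    rw [hc]; simp only [hrw]
    refine (Finset.card_equiv w fun i => ?_).symm
    simp only [mem_filter, mem_univ, true_and]
    simp only [Equiv.Perm.mul_apply,
      Equiv.Perm.inv_apply_self]
    constructor
    · rintro ⟨h1', h2'⟩; exact ⟨by rw [h1'], h2'⟩
    · rintro ⟨h1', h2'⟩; exact ⟨w.injective h1', h2'⟩
  by_cases hA : ∃ v, ¬ x v = v ∧ ¬ z v = v
  · obtain ⟨v, hv1, hv2⟩ := hA
    have hfv : f ≠ v := fun h => hv1 (h ▸ hf)
    have h1 : c (Equiv.swap f v * g₀) = #(T1.erase f) := by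
      rw [hcw]
      congr 1
      ext q
      simp only [mem_filter, mem_univ, true_and, mem_erase, hT1]
      by_cases hq1 : q = f
      · subst hq1
        simp only [Equiv.swap_apply_left]
        constructor
        · rintro ⟨-, h2'⟩; exact absurd h2' hv1
        · rintro ⟨h', -⟩; exact absurd rfl h'
      · by_cases hq2 : q = v
        · subst hq2
          constructor
          · rintro ⟨h1', -⟩; exact absurd h1' hv2
          · rintro ⟨-, h1', -⟩; exact absurd h1' hv2
        · rw [Equiv.swap_apply_of_ne_of_ne hq1 hq2]
          constructor
          · rintro ⟨h1', h2'⟩; exact ⟨hq1, h1', h2'⟩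
          · rintro ⟨-, h1', h2'⟩; exact ⟨h1', h2'⟩
    have h2 : #(T1.erase f) = #T1 - 1 := card_erase_of_mem hfT1
    have h3 : 1 ≤ #T1 := card_pos.mpr ⟨f, hfT1⟩
    have h4 := (hconst (Equiv.swap f v * g₀)).trans (hconst g₀).symm
    rw [h1, h2, hm] at h4
    omega
  · push_neg at hA
    by_cases hB : ∃ w, z w = w ∧ ¬ x w = w
    · by_cases hC : ∃ v, x v = v ∧ ¬ z v = v
      · obtain ⟨w, hw1, hw2⟩ := hB
        obtain ⟨v, hv1, hv2⟩ := hC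
        have hwv : w ≠ v := fun h => hw2 (h ▸ hv1)
        have h1 : c (Equiv.swap w v * g₀) = #(insert w T1) := by
          rw [hcw]
          congr 1
          ext q
          simp only [mem_filter, mem_univ, true_and, mem_insert, hT1]
          by_cases hq1 : q = w
          · subst hq1
            simp only [Equiv.swap_apply_left]
            exact ⟨fun _ => by simp, fun _ => ⟨hw1, hv1⟩⟩
          · by_cases hq2 : q = v
            · subst hq2
              constructor
              · rintro ⟨h1', -⟩; exact absurd h1' hv2
              · rintro (h | ⟨h1', -⟩)
                · exact absurd h.symm hwv
                · exact absurd h1' hv2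
            · rw [Equiv.swap_apply_of_ne_of_ne hq1 hq2]
              constructor
              · rintro ⟨h1', h2'⟩; exact Or.inr ⟨h1', h2'⟩
              · rintro (h | ⟨h1', h2'⟩)
                · exact absurd h hq1
                · exact ⟨h1', h2'⟩
        have h2 : #(insert w T1) = #T1 + 1 := by
          rw [card_insert_of_notMem]
          intro hmem
          exact hw2 ((mem_filter.mp hmem).2.2)
        have h4 := (hconst (Equiv.swap w v * g₀)).trans (hconst g₀).symm
        rw [h1, h2, hm] at h4
        omega
      · push_neg at hC
        have hzall : ∀ v, z v = v := by
          intro v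
          by_cases h : x v = v
          · exact hC v h
          · exact hA v h
        have : y = 1 := by
          apply perm_eq_one_of_fix'
          intro r
          have h := hzall (g₀ r)
          rw [hz] at h
          simp only [Equiv.Perm.mul_apply, Equiv.Perm.inv_apply_self] at h
          exact g₀.injective h
        exact hy this
    · push_neg at hB
      have : x = 1 := by
        apply perm_eq_one_of_fix'
        intro v
        by_cases h : x v = v
        · exact h
        · exact hB v (hA v h)
      exact hx this


/-- For `n ≥ 5`, the symmetric group `Sym(n)` admits no factorization
`Sym(n) = C(x) C(y)` with `x, y` non-identity permutations. -/

theorem stmt_7 (n : ℕ) (hn : 5 ≤ n) :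
    ¬ ∃ x y : Equiv.Perm (Fin n), x ≠ 1 ∧ y ≠ 1 ∧
      ∀ g : Equiv.Perm (Fin n), ∃ u ∈ Subgroup.centralizer {x},
        ∃ v ∈ Subgroup.centralizer {y}, g = u * v := by
  rintro ⟨x, y, hx, hy, hfac⟩
  have hkeyxy : ∀ g : Equiv.Perm (Fin n), ∃ u, x * u = u * x ∧ g * y * g⁻¹ = u * y * u⁻¹ := by
    intro g
    obtain ⟨u, hu, v, hv, hg⟩ := hfac g
    have hu' : u * x = x * u := Subgroup.mem_centralizer_singleton_iff.mp hu
    have hv' : v * y = y * v := Subgroup.mem_centralizer_singleton_iff.mp hv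
    refine ⟨u, hu'.symm, ?_⟩
    have hvy : v * y * v⁻¹ = y := by
      calc v * y * v⁻¹ = (v * y) * v⁻¹ := by group
        _ = (y * v) * v⁻¹ := by rw [hv']
        _ = y := by group
    rw [hg]
    calc (u * v) * y * (u * v)⁻¹ = u * (v * y * v⁻¹) * u⁻¹ := by group
      _ = u * y * u⁻¹ := by rw [hvy]
  have hkeyyx : ∀ g : Equiv.Perm (Fin n), ∃ u, y * u = u * y ∧ g * x * g⁻¹ = u * x * u⁻¹ := by
    intro g
    obtain ⟨u, hu, v, hv, hg⟩ := hfac g⁻¹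
    have hu' : u * x = x * u := Subgroup.mem_centralizer_singleton_iff.mp hu
    have hv' : v * y = y * v := Subgroup.mem_centralizer_singleton_iff.mp hv
    refine ⟨v⁻¹, ?_, ?_⟩
    · calc y * v⁻¹ = v⁻¹ * (v * y) * v⁻¹ := by group
        _ = v⁻¹ * (y * v) * v⁻¹ := by rw [hv']
        _ = v⁻¹ * y := by group
    · have hg' : g = v⁻¹ * u⁻¹ := by rw [← mul_inv_rev, ← hg, inv_inv]
      have hx' : u⁻¹ * x * u = x := by
        calc u⁻¹ * x * u = u⁻¹ * (x * u) := by group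
          _ = u⁻¹ * (u * x) := by rw [← hu']
          _ = x := by group
      rw [hg']
      calc (v⁻¹ * u⁻¹) * x * (v⁻¹ * u⁻¹)⁻¹ = v⁻¹ * (u⁻¹ * x * u) * v := by group
        _ = v⁻¹ * x * v := by rw [hx']
        _ = v⁻¹ * x * (v⁻¹)⁻¹ := by rw [inv_inv]
  by_cases hfx : ∃ p, x p = p
  · by_cases hfy : ∃ q, y q = q
    · exact caseC hx hy hkeyxy hfx hfy
    · push_neg at hfy
      exact caseD hn hx hkeyyx hfy
  · push_neg at hfx
    exact caseD hn hy hkeyxy hfx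
end

section
/- Let r ≥ 5 be a prime, let F be the field with r elements, and let G := PGL₂(F) = GL₂(F)/Z(GL₂(F)). Let x ∈ G be an element of order r, and let y ∈ G be an element such that every matrix A ∈ GL₂(F) whose image in G is y admits no eigenvector, i.e., there is no nonzero v ∈ F² and c ∈ F with A·v = c·v. Then every element of G is a product u·v with u ∈ N_G(⟨x⟩) and v ∈ N_G(⟨y⟩). -/
open Matrix

section Pgl8Aux

variable {F : Type*} [Field F] [Fintype F]

omit [Fintype F] in
private lemma pgl8_mul_self (M : Matrix (Fin 2) (Fin 2) F) :
    M * M = M.trace • M - M.det • 1 := by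
  ext i j
  fin_cases i <;> fin_cases j <;>
    simp [Matrix.mul_apply, Fin.sum_univ_two, Matrix.trace_fin_two, Matrix.det_fin_two,
      Matrix.one_apply] <;> ring

omit [Fintype F] in
private lemma pgl8_adj (M : Matrix (Fin 2) (Fin 2) F) : M.adjugate = M.trace • 1 - M := by
  rw [Matrix.adjugate_fin_two]
  ext i j
  fin_cases i <;> fin_cases j <;> simp [Matrix.trace_fin_two, Matrix.one_apply]

omit [Fintype F] in
private lemma pgl8_eq_zero (M : Matrix (Fin 2) (Fin 2) F) (h : ∀ v, M.mulVec v = 0) :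
    M = 0 := by
  ext i j
  have := congrFun (h (Pi.single j 1)) i
  simpa [Matrix.mulVec_single] using this

omit [Fintype F] in
private lemma pgl8_central_iff (u : GL (Fin 2) F) :
    u ∈ Subgroup.center (GL (Fin 2) F) ↔
      ∃ c : F, c ≠ 0 ∧ (u : Matrix (Fin 2) (Fin 2) F) = c • 1 := by
  constructor
  · intro h
    rw [Subgroup.mem_center_iff] at h
    have h2 : ∀ t : Matrix.TransvectionStruct (Fin 2) F,
        Commute t.toMatrix (u : Matrix (Fin 2) (Fin 2) F) := by
      intro t
      have hu : IsUnit t.toMatrix := by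
        rw [Matrix.isUnit_iff_isUnit_det, t.det]; exact isUnit_one
      have := congrArg Units.val (h hu.unit)
      simpa [Commute, SemiconjBy, hu.unit_spec] using this
    obtain ⟨c, hc⟩ := Matrix.mem_range_scalar_of_commute_transvectionStruct h2
    refine ⟨c, ?_, by simp [← hc, Matrix.scalar_apply, Matrix.smul_one_eq_diagonal]⟩
    intro hc0
    subst hc0
    have : (u : Matrix (Fin 2) (Fin 2) F) = 0 := by
      simp [← hc, Matrix.scalar_apply]
    have h1 : (1 : Matrix (Fin 2) (Fin 2) F) = 0 := by
      calc (1 : Matrix (Fin 2) (Fin 2) F) = ↑(u * u⁻¹) := by simp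
      _ = (u : Matrix (Fin 2) (Fin 2) F) * ↑u⁻¹ := rfl
      _ = 0 := by rw [this, zero_mul]
    exact one_ne_zero h1
  · rintro ⟨c, hc0, hc⟩
    rw [Subgroup.mem_center_iff]
    intro g
    ext1
    show (g : Matrix (Fin 2) (Fin 2) F) * u = (u : Matrix (Fin 2) (Fin 2) F) * g
    rw [hc]
    ext i j
    simp [Matrix.smul_one_eq_diagonal, Matrix.mul_diagonal, Matrix.diagonal_mul, mul_comm]

omit [Fintype F] in
private def pgl8_scalGL (c : F) (hc : c ≠ 0) : GL (Fin 2) F :=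
  ⟨c • 1, c⁻¹ • 1, by rw [smul_mul_smul_comm, mul_inv_cancel₀ hc, one_mul, one_smul],
    by rw [smul_mul_smul_comm, inv_mul_cancel₀ hc, one_mul, one_smul]⟩

private lemma pgl8_card_center :
    Nat.card (Subgroup.center (GL (Fin 2) F)) = Fintype.card F - 1 := by
  have e : {c : F // c ≠ 0} ≃ Subgroup.center (GL (Fin 2) F) := by
    refine Equiv.ofBijective
      (fun c => ⟨pgl8_scalGL c.1 c.2, (pgl8_central_iff _).mpr ⟨c.1, c.2, rfl⟩⟩) ⟨?_, ?_⟩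
    · intro c d h
      have := congrArg (fun z => ((z : Subgroup.center (GL (Fin 2) F)) :
        GL (Fin 2) F).val 0 0) h
      simp only [pgl8_scalGL] at this
      ext
      simpa [Matrix.smul_apply, Matrix.one_apply] using this
    · rintro ⟨u, hu⟩
      obtain ⟨c, hc0, hc⟩ := (pgl8_central_iff u).mp hu
      refine ⟨⟨c, hc0⟩, ?_⟩
      ext1
      ext1
      simpa [pgl8_scalGL] using hc.symm
  rw [← Nat.card_congr e, Nat.card_congr (unitsEquivNeZero (G₀ := F)).symm, Nat.card_units,
    Nat.card_eq_fintype_card]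

omit [Fintype F] in
private lemma pgl8_nonscalar (A : Matrix (Fin 2) (Fin 2) F)
    (hA : ¬ ∃ (v : Fin 2 → F) (c : F), v ≠ 0 ∧ A.mulVec v = c • v) :
    ∀ c : F, A ≠ c • 1 := by
  intro c hc
  refine hA ⟨Pi.single 0 1, c, ?_, ?_⟩
  · intro h
    have := congrFun h 0
    simp at this
  · rw [hc, Matrix.smul_mulVec, Matrix.one_mulVec]

omit [Fintype F] in
private lemma pgl8_isUnit (A : Matrix (Fin 2) (Fin 2) F)
    (hA : ¬ ∃ (v : Fin 2 → F) (c : F), v ≠ 0 ∧ A.mulVec v = c • v)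
    (a b : F) (h : ¬(a = 0 ∧ b = 0)) : IsUnit (a • (1 : Matrix (Fin 2) (Fin 2) F) + b • A) := by
  rw [Matrix.isUnit_iff_isUnit_det, isUnit_iff_ne_zero]
  intro hdet
  rw [← Matrix.exists_mulVec_eq_zero_iff] at hdet
  obtain ⟨v, hv, hv0⟩ := hdet
  rcases eq_or_ne b 0 with hb | hb
  · subst hb
    rcases (not_and_or.mp h) with ha | ha
    · simp only [zero_smul, add_zero, Matrix.smul_mulVec, Matrix.one_mulVec] at hv0
      exact hv (by simpa [smul_eq_zero, ha] using hv0)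
    · exact ha rfl
  · refine hA ⟨v, -a / b, hv, ?_⟩
    have h1 : a • v + b • A.mulVec v = 0 := by
      simpa [Matrix.add_mulVec, Matrix.smul_mulVec, Matrix.one_mulVec] using hv0
    funext i
    have h2 := congrFun h1 i
    simp only [Pi.add_apply, Pi.smul_apply, smul_eq_mul, Pi.zero_apply] at h2
    show A.mulVec v i = (-a/b) * v i
    rw [div_mul_eq_mul_div, eq_div_iff hb]
    linear_combination h2

omit [Fintype F] in
private def pgl8_S (A : Matrix (Fin 2) (Fin 2) F) : Subgroup (GL (Fin 2) F) where
  carrier := {B | ∃ a b : F, (B : Matrix (Fin 2) (Fin 2) F) = a • 1 + b • A}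
  one_mem' := ⟨1, 0, by simp⟩
  mul_mem' := by
    rintro B C ⟨a, b, hB⟩ ⟨c, d, hC⟩
    refine ⟨a * c - b * d * A.det, a * d + b * c + b * d * A.trace, ?_⟩
    show (B : Matrix (Fin 2) (Fin 2) F) * C = _
    rw [hB, hC]
    have h2 := pgl8_mul_self A
    rw [mul_add, add_mul, add_mul, smul_mul_smul_comm, smul_mul_smul_comm,
      smul_mul_smul_comm, smul_mul_smul_comm]
    simp only [one_mul, mul_one]
    rw [h2]
    module
  inv_mem' := by
    rintro B ⟨a, b, hB⟩
    have hdet : IsUnit (B : Matrix (Fin 2) (Fin 2) F).det := by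
      rw [← Matrix.isUnit_iff_isUnit_det]; exact ⟨B, rfl⟩
    obtain ⟨du, hdu⟩ := hdet
    refine ⟨(du⁻¹ : Fˣ) * ((B : Matrix (Fin 2) (Fin 2) F).trace - a),
      -((du⁻¹ : Fˣ) * b), ?_⟩
    show ((B⁻¹ : GL (Fin 2) F) : Matrix (Fin 2) (Fin 2) F) = _
    rw [Matrix.coe_units_inv, Matrix.inv_def, ← hdu, Ring.inverse_unit, pgl8_adj, hB]
    rw [smul_sub]
    module

omit [Fintype F] in
private lemma pgl8_comb_inj (A : Matrix (Fin 2) (Fin 2) F) (hA : ∀ c : F, A ≠ c • 1)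
    {a b c d : F} (h : a • (1 : Matrix (Fin 2) (Fin 2) F) + b • A = c • 1 + d • A) :
    a = c ∧ b = d := by
  have hbd : b = d := by
    by_contra hbd
    apply hA ((d - b)⁻¹ * (a - c))
    have h1 : (a - c) • (1 : Matrix (Fin 2) (Fin 2) F) = (d - b) • A := by
      rw [sub_smul, sub_smul]
      rw [sub_eq_sub_iff_add_eq_add]
      linear_combination (norm := module) h
    have h2 : (d - b)⁻¹ • ((a - c) • (1 : Matrix (Fin 2) (Fin 2) F)) = A := by
      rw [h1, smul_smul, inv_mul_cancel₀ (sub_ne_zero.mpr (Ne.symm hbd)), one_smul]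
    rw [← h2, smul_smul]
  subst hbd
  refine ⟨?_, rfl⟩
  have h1 : a • (1 : Matrix (Fin 2) (Fin 2) F) = c • 1 := by
    linear_combination (norm := module) h
  have := congrFun (congrFun h1 0) 0
  simpa [Matrix.one_apply] using this

private lemma pgl8_card_S (A : Matrix (Fin 2) (Fin 2) F)
    (hA : ¬ ∃ (v : Fin 2 → F) (c : F), v ≠ 0 ∧ A.mulVec v = c • v) :
    Nat.card (pgl8_S A) = Fintype.card F ^ 2 - 1 := by
  classical
  have hns := pgl8_nonscalar A hA
  have key : ∀ p : {p : F × F // p ≠ 0}, ¬(p.1.1 = 0 ∧ p.1.2 = 0) := by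
    rintro ⟨⟨a, b⟩, hp⟩ ⟨rfl, rfl⟩
    exact hp rfl
  have e : {p : F × F // p ≠ 0} ≃ pgl8_S A := by
    refine Equiv.ofBijective
      (fun p => ⟨(pgl8_isUnit A hA p.1.1 p.1.2 (key p)).unit,
        ⟨p.1.1, p.1.2, (pgl8_isUnit A hA p.1.1 p.1.2 (key p)).unit_spec⟩⟩) ⟨?_, ?_⟩
    · intro p q hpq
      have h1 : ((((fun p : {p : F × F // p ≠ 0} =>
        (⟨(pgl8_isUnit A hA p.1.1 p.1.2 (key p)).unit,
          ⟨p.1.1, p.1.2, (pgl8_isUnit A hA p.1.1 p.1.2 (key p)).unit_spec⟩⟩ : pgl8_S A)) p :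
            pgl8_S A) : GL (Fin 2) F) : Matrix (Fin 2) (Fin 2) F) = _ :=
        congrArg (fun z => ((z : pgl8_S A) : GL (Fin 2) F).val) hpq
      simp only [IsUnit.unit_spec] at h1
      obtain ⟨h2, h3⟩ := pgl8_comb_inj A hns h1
      exact Subtype.ext (Prod.ext h2 h3)
    · rintro ⟨B, a, b, hB⟩
      have hab : ¬(a = 0 ∧ b = 0) := by
        rintro ⟨rfl, rfl⟩
        simp only [zero_smul, add_zero] at hB
        have h1 : (1 : Matrix (Fin 2) (Fin 2) F) = 0 := by
          calc (1 : Matrix (Fin 2) (Fin 2) F) = ↑(B * B⁻¹) := by simp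
          _ = (B : Matrix (Fin 2) (Fin 2) F) * ↑B⁻¹ := rfl
          _ = 0 := by rw [hB, zero_mul]
        exact one_ne_zero h1
      have hp0 : ((a, b) : F × F) ≠ 0 := by
        intro h
        rw [Prod.ext_iff] at h
        exact hab ⟨h.1, h.2⟩
      refine ⟨⟨(a, b), hp0⟩, ?_⟩
      ext1
      ext1
      simpa using hB.symm
  rw [← Nat.card_congr e]
  rw [Nat.card_eq_fintype_card]
  rw [Fintype.card_subtype_compl (p := fun p : F × F => p = 0)]
  simp [Fintype.card_prod, sq]

omit [Fintype F] in
private lemma pgl8_binom (z : F) (N : Matrix (Fin 2) (Fin 2) F) (hN : N * N = 0) :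
    ∀ k : ℕ, (z • (1 : Matrix (Fin 2) (Fin 2) F) + N) ^ (k + 1)
      = z ^ (k + 1) • 1 + ((k + 1 : F) * z ^ k) • N := by
  intro k
  induction k with
  | zero => simp
  | succ k ih =>
    rw [pow_succ, ih]
    simp only [add_mul, mul_add, Matrix.smul_mul, Matrix.mul_smul, one_mul, mul_one, hN,
      smul_zero, add_zero, smul_smul]
    push_cast
    module

omit [Fintype F] in
private lemma pgl8_sq_zero (N : Matrix (Fin 2) (Fin 2) F) (k : ℕ) (hk : k ≠ 0)
    (h : N ^ k = 0) : N * N = 0 := by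
  rcases eq_or_ne N 0 with rfl | hN0
  · simp
  have hdet : N.det = 0 := by
    have : N.det ^ k = 0 := by rw [← Matrix.det_pow, h, Matrix.det_zero]
    exact pow_eq_zero_iff hk |>.mp this
  have hsq : N * N = N.trace • N := by
    rw [pgl8_mul_self, hdet, zero_smul, sub_zero]
  have hpow : ∀ j : ℕ, N ^ (j + 1) = N.trace ^ j • N := by
    intro j
    induction j with
    | zero => simp
    | succ j ih =>
      rw [pow_succ, ih, Matrix.smul_mul, hsq, smul_smul, ← pow_succ]
  obtain ⟨k', rfl⟩ : ∃ k', k = k' + 1 :=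
    ⟨k - 1, (Nat.succ_pred_eq_of_pos (Nat.pos_of_ne_zero hk)).symm⟩
  rw [hpow k'] at h
  have h2 : N.trace ^ k' = 0 := by
    rcases smul_eq_zero.mp h with h' | h'
    · exact h'
    · exact absurd h' hN0
  have h3 : N.trace = 0 := by
    rcases eq_or_ne k' 0 with rfl | hk'
    · simpa using h2
    · exact pow_eq_zero_iff hk' |>.mp h2
  rw [hsq, h3, zero_smul]

omit [Fintype F] in
private lemma pgl8_ker (N : Matrix (Fin 2) (Fin 2) F) (hN0 : N ≠ 0) (hN2 : N * N = 0) :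
    ∃ v₀ : Fin 2 → F, v₀ ≠ 0 ∧ N.mulVec v₀ = 0 ∧
      ∀ u : Fin 2 → F, N.mulVec u = 0 → ∃ d : F, u = d • v₀ := by
  have hw : ∃ w, N.mulVec w ≠ 0 := by
    by_contra h
    push_neg at h
    exact hN0 (pgl8_eq_zero N h)
  obtain ⟨w, hw⟩ := hw
  refine ⟨N.mulVec w, hw, by rw [Matrix.mulVec_mulVec, hN2, Matrix.zero_mulVec], ?_⟩
  intro u hu
  rcases eq_or_ne u 0 with rfl | hu0
  · exact ⟨0, by simp⟩
  by_contra hcon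
  push_neg at hcon
  have hli : LinearIndependent F ![u, N.mulVec w] := by
    rw [linearIndependent_fin2]
    refine ⟨hw, fun a ha => hcon a ha.symm⟩
  have hcard : Fintype.card (Fin 2) = Module.finrank F (Fin 2 → F) := by
    simp [Module.finrank_fintype_fun_eq_card]
  let b := basisOfLinearIndependentOfCardEqFinrank hli hcard
  have hb : ⇑b = ![u, N.mulVec w] := coe_basisOfLinearIndependentOfCardEqFinrank hli hcard
  have hker : ∀ i, N.mulVec (b i) = 0 := by
    intro i
    fin_cases i
    · simp [hb, hu]
    · rw [hb]
      show N.mulVec (N.mulVec w) = 0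
      rw [Matrix.mulVec_mulVec, hN2, Matrix.zero_mulVec]
  apply hN0
  apply pgl8_eq_zero
  intro v
  have hv := b.sum_repr v
  rw [← hv]
  rw [← Matrix.mulVecLin_apply, map_sum]
  simp only [_root_.map_smul, Matrix.mulVecLin_apply, hker, smul_zero, Finset.sum_const_zero]

private lemma pgl8_arith (r d : ℕ) (hr : 2 ≤ r) (hd : d ∣ r ^ 2 - 1) (h1 : d % r = 1 % r) :
    d = 1 ∨ d = r + 1 := by
  have h1r : (1 : ℕ) % r = 1 := Nat.mod_eq_of_lt (by omega)
  rw [h1r] at h1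
  have hrr : r * r = r ^ 2 := by ring
  have hr1 : 1 ≤ r ^ 2 := by nlinarith
  have hr4 : 4 ≤ r ^ 2 := by nlinarith
  obtain ⟨e, he⟩ := hd
  have hd0 : d ≠ 0 := by rintro rfl; rw [Nat.zero_mod] at h1; omega
  have he0 : e ≠ 0 := by rintro rfl; rw [mul_zero] at he; omega
  have h3 : (r ^ 2 - 1) % r = r - 1 := by
    have hsplit : r ^ 2 - 1 = (r - 1) + (r - 1) * r := by
      zify [show 1 ≤ r from by omega, hr1]
      ring
    rw [hsplit, Nat.add_mul_mod_self_right, Nat.mod_eq_of_lt (by omega)]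
  have h2 : d * e % r = r - 1 := by rw [← he, h3]
  have h4 : e % r = r - 1 := by
    have h5 := Nat.mul_mod d e r
    rw [h1, one_mul, Nat.mod_mod_of_dvd _ dvd_rfl] at h5
    rw [h5] at h2
    exact h2
  rcases eq_or_ne d 1 with h | h
  · exact Or.inl h
  right
  have hdiv := Nat.div_add_mod d r
  rw [h1] at hdiv
  have hd2 : r + 1 ≤ d := by
    rcases Nat.eq_zero_or_pos (d / r) with h0 | h0
    · rw [h0, Nat.mul_zero] at hdiv
      omega
    · have : r * 1 ≤ r * (d / r) := Nat.mul_le_mul_left r h0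
      omega
  have hlt : e < r := by
    by_contra hge
    push_neg at hge
    have hm : (r + 1) * r ≤ d * e := Nat.mul_le_mul hd2 hge
    zify [hr1] at he hm
    nlinarith
  have he2 : e = r - 1 := by rw [Nat.mod_eq_of_lt hlt] at h4; exact h4
  subst he2
  have hkey : d * (r - 1) = (r + 1) * (r - 1) := by
    zify [show 1 ≤ r from by omega, hr1] at he ⊢
    linear_combination -he
  exact Nat.eq_of_mul_eq_mul_right (by omega) hkey

private lemma pgl8_norm_of_commute {H : Type*} [Group H] {t g : H} (h : Commute t g) :
    t ∈ Subgroup.normalizer (Subgroup.zpowers g : Set H) := by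
  have key : ∀ m : ℤ, t * g ^ m * t⁻¹ = g ^ m := by
    intro m
    have hc := (h.zpow_right m).eq
    rw [hc, mul_assoc, mul_inv_cancel, mul_one]
  have key' : ∀ m : ℤ, t⁻¹ * g ^ m * t = g ^ m := by
    intro m
    have hc := ((h.inv_left).zpow_right m).eq
    rw [hc, mul_assoc, inv_mul_cancel, mul_one]
  rw [Subgroup.mem_normalizer_iff]
  intro w
  constructor
  · rintro ⟨m, rfl⟩
    exact ⟨m, (key m).symm⟩
  · rintro ⟨m, hm⟩
    have hm' : g ^ m = t * w * t⁻¹ := hm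
    have hw : w = g ^ m := by
      have h2 : t⁻¹ * (t * w * t⁻¹) * t = w := by group
      rw [← hm'] at h2
      rw [← h2, key']
    exact ⟨m, hw.symm⟩

end Pgl8Aux

set_option maxHeartbeats 2000000 in
/-- Line 3 of Table 1: in `G = PGL₂(r)` with `r ≥ 5` prime, if `|x| = r` and `y` has no
1-dimensional eigenspace, then `G = N_G(⟨x⟩) N_G(⟨y⟩)`. -/
theorem stmt_8 (r : ℕ) (hr : r.Prime) (hr5 : 5 ≤ r)
    (F : Type*) [Field F] [Fintype F] (hF : Fintype.card F = r)
    (x y : Matrix.GeneralLinearGroup (Fin 2) F ⧸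
      Subgroup.center (Matrix.GeneralLinearGroup (Fin 2) F))
    (hx : orderOf x = r)
    (hy : ∀ A : Matrix.GeneralLinearGroup (Fin 2) F, (QuotientGroup.mk A : _) = y →
      ¬ ∃ (v : Fin 2 → F) (c : F), v ≠ 0 ∧
        Matrix.mulVec (A : Matrix (Fin 2) (Fin 2) F) v = c • v) :
    ∀ g : Matrix.GeneralLinearGroup (Fin 2) F ⧸
        Subgroup.center (Matrix.GeneralLinearGroup (Fin 2) F),
      ∃ u ∈ Subgroup.normalizer (Subgroup.zpowers x : Set _),
        ∃ v ∈ Subgroup.normalizer (Subgroup.zpowers y : Set _), g = u * v := by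
  classical
  haveI hFact : Fact r.Prime := ⟨hr⟩
  haveI hcharF : CharP F r := charP_of_card_eq_prime hF
  obtain ⟨A, rfl⟩ := QuotientGroup.mk_surjective y
  have hyA := hy A rfl
  -- cardinalities
  have hcardGL : Nat.card (GL (Fin 2) F) = (r ^ 2 - 1) * (r ^ 2 - r) := by
    rw [Matrix.card_GL_field, Fin.prod_univ_two, hF]
    norm_num
  have hcardZ : Nat.card (Subgroup.center (GL (Fin 2) F)) = r - 1 := by
    rw [pgl8_card_center, hF]
  have hsub1 : r ^ 2 - r = r * (r - 1) := by
    zify [show r ≤ r ^ 2 from by nlinarith, show 1 ≤ r from by omega]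
    ring
  have hcardG : Nat.card (GL (Fin 2) F ⧸ Subgroup.center (GL (Fin 2) F)) = r * (r ^ 2 - 1) := by
    have h1 : Nat.card (GL (Fin 2) F) =
        Nat.card (GL (Fin 2) F ⧸ Subgroup.center (GL (Fin 2) F)) *
          Nat.card (Subgroup.center (GL (Fin 2) F)) :=
      Subgroup.card_eq_card_quotient_mul_card_subgroup (Subgroup.center (GL (Fin 2) F))
    rw [hcardGL, hcardZ, hsub1] at h1
    have h2 : (r ^ 2 - 1) * (r * (r - 1)) = (r * (r ^ 2 - 1)) * (r - 1) := by ring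
    rw [h2] at h1
    exact (Nat.eq_of_mul_eq_mul_right (by omega) h1.symm)
  have hndvd : ¬ r ∣ r ^ 2 - 1 := by
    intro hdvd
    have h1 : r ∣ r ^ 2 := dvd_pow_self r (by omega)
    have h2 : r ∣ r ^ 2 - (r ^ 2 - 1) := Nat.dvd_sub h1 hdvd
    have h3 : r ^ 2 - (r ^ 2 - 1) = 1 := by
      have : 1 ≤ r ^ 2 := by nlinarith [show 2 ≤ r from by omega]
      omega
    rw [h3] at h2
    exact hr.one_lt.ne' (Nat.dvd_one.mp h2)
  have hr21 : r ^ 2 - 1 ≠ 0 := by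
    have : 4 ≤ r ^ 2 := by nlinarith [show 2 ≤ r from by omega]
    omega
  have hfac : (Nat.card (GL (Fin 2) F ⧸ Subgroup.center (GL (Fin 2) F))).factorization r = 1 := by
    rw [hcardG, Nat.factorization_mul hr.ne_zero hr21]
    simp [hr.factorization_self, Nat.factorization_eq_zero_of_not_dvd hndvd]
  -- the Sylow subgroup generated by x
  have hcardzx : Nat.card (Subgroup.zpowers x) =
      r ^ (Nat.card (GL (Fin 2) F ⧸ Subgroup.center (GL (Fin 2) F))).factorization r := by
    rw [Nat.card_zpowers, hx, hfac, pow_one]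
  let Q₀ : Sylow r (GL (Fin 2) F ⧸ Subgroup.center (GL (Fin 2) F)) :=
    Sylow.ofCard (Subgroup.zpowers x) hcardzx
  have hQ₀ : (Q₀ : Subgroup (GL (Fin 2) F ⧸ Subgroup.center (GL (Fin 2) F))) =
      Subgroup.zpowers x := rfl
  -- number of Sylow subgroups
  have hmod : Nat.card (Sylow r (GL (Fin 2) F ⧸ Subgroup.center (GL (Fin 2) F))) % r = 1 % r :=
    card_sylow_modEq_one r _
  have hindex : (Q₀ : Subgroup (GL (Fin 2) F ⧸ Subgroup.center (GL (Fin 2) F))).index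
      = r ^ 2 - 1 := by
    have h1 := Subgroup.card_mul_index
      (Q₀ : Subgroup (GL (Fin 2) F ⧸ Subgroup.center (GL (Fin 2) F)))
    rw [hQ₀, Nat.card_zpowers, hx, hcardG] at h1
    exact Nat.eq_of_mul_eq_mul_left (by omega) h1
  have hdvd : Nat.card (Sylow r (GL (Fin 2) F ⧸ Subgroup.center (GL (Fin 2) F))) ∣ r ^ 2 - 1 :=
    hindex ▸ Q₀.card_dvd_index
  rcases pgl8_arith r _ (by omega) hdvd hmod with hn1 | hn
  · -- only one Sylow subgroup: the normalizer of x is everything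
    haveI hsing : Subsingleton (Sylow r (GL (Fin 2) F ⧸ Subgroup.center (GL (Fin 2) F))) :=
      (Nat.card_eq_one_iff_unique.mp hn1).1
    intro g
    refine ⟨g, ?_, 1, Subgroup.one_mem _, (mul_one g).symm⟩
    have hst : g • Q₀ = Q₀ := Subsingleton.elim _ _
    have hse := Sylow.stabilizer_eq_normalizer Q₀
    have hg : g ∈ MulAction.stabilizer (GL (Fin 2) F ⧸ Subgroup.center (GL (Fin 2) F)) Q₀ := hst
    rw [hse] at hg
    rw [← hQ₀]
    exact hg
  · -- r + 1 Sylow subgroups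
    -- the subgroup S' of GL generated by A over scalars, and its image T = f.range
    have hfc : ∀ B : pgl8_S ((A : Matrix (Fin 2) (Fin 2) F)),
        Commute ((QuotientGroup.mk (B : GL (Fin 2) F)) :
          GL (Fin 2) F ⧸ Subgroup.center (GL (Fin 2) F)) (QuotientGroup.mk A) := by
      intro B
      obtain ⟨a, b, hB⟩ := B.2
      have hcm : Commute (B : GL (Fin 2) F) A := by
        show (B : GL (Fin 2) F) * A = A * (B : GL (Fin 2) F)
        ext1
        show ((B : GL (Fin 2) F) : Matrix (Fin 2) (Fin 2) F) * (A : Matrix (Fin 2) (Fin 2) F)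
            = (A : Matrix (Fin 2) (Fin 2) F) * ((B : GL (Fin 2) F) : Matrix (Fin 2) (Fin 2) F)
        rw [hB]
        simp only [add_mul, mul_add, Matrix.smul_mul, Matrix.mul_smul, one_mul, mul_one]
      exact hcm.map (QuotientGroup.mk' (Subgroup.center (GL (Fin 2) F)))
    set f : pgl8_S ((A : Matrix (Fin 2) (Fin 2) F)) →*
        (GL (Fin 2) F ⧸ Subgroup.center (GL (Fin 2) F)) :=
      (QuotientGroup.mk' (Subgroup.center (GL (Fin 2) F))).comp
        (pgl8_S ((A : Matrix (Fin 2) (Fin 2) F))).subtype with hf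
    have hfval : ∀ B : pgl8_S ((A : Matrix (Fin 2) (Fin 2) F)),
        f B = QuotientGroup.mk (B : GL (Fin 2) F) := fun _ => rfl
    have hTnorm : ∀ t ∈ f.range,
        t ∈ Subgroup.normalizer (Subgroup.zpowers (QuotientGroup.mk A :
          GL (Fin 2) F ⧸ Subgroup.center (GL (Fin 2) F)) : Set _) := by
      rintro t ⟨B, rfl⟩
      rw [hfval]
      exact pgl8_norm_of_commute (hfc B)
    -- cardinality of T
    have hcardS : Nat.card (pgl8_S ((A : Matrix (Fin 2) (Fin 2) F))) = r ^ 2 - 1 := by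
      rw [pgl8_card_S _ hyA, hF]
    have hquot : Nat.card (pgl8_S ((A : Matrix (Fin 2) (Fin 2) F)))
        = Nat.card f.range * Nat.card f.ker := by
      rw [Subgroup.card_eq_card_quotient_mul_card_subgroup f.ker]
      congr 1
      exact Nat.card_congr (QuotientGroup.quotientKerEquivRange f).toEquiv
    have hker : Nat.card f.ker = r - 1 := by
      have e : {c : F // c ≠ 0} ≃ f.ker := by
        refine Equiv.ofBijective (fun c =>
          ⟨⟨pgl8_scalGL c.1 c.2, ⟨c.1, 0, by simp [pgl8_scalGL]⟩⟩, ?_⟩) ⟨?_, ?_⟩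
        · rw [MonoidHom.mem_ker, hfval]
          exact (QuotientGroup.eq_one_iff _).mpr
            ((pgl8_central_iff _).mpr ⟨c.1, c.2, rfl⟩)
        · intro c d hcd
          have := congrArg (fun z => (((z : f.ker) : pgl8_S ((A : Matrix (Fin 2) (Fin 2) F))) :
            GL (Fin 2) F).val 0 0) hcd
          simp only [pgl8_scalGL] at this
          ext
          simpa [Matrix.smul_apply, Matrix.one_apply] using this
        · rintro ⟨⟨u, hu⟩, huk⟩
          rw [MonoidHom.mem_ker, hfval] at huk
          obtain ⟨c, hc0, hc⟩ := (pgl8_central_iff u).mp ((QuotientGroup.eq_one_iff _).mp huk)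
          refine ⟨⟨c, hc0⟩, ?_⟩
          ext1
          ext1
          ext1
          simpa [pgl8_scalGL] using hc.symm
      rw [← Nat.card_congr e, Nat.card_congr (unitsEquivNeZero (G₀ := F)).symm, Nat.card_units,
        Nat.card_eq_fintype_card, hF]
    have hcardT : Nat.card f.range = r + 1 := by
      rw [hcardS, hker] at hquot
      have h2 : (r + 1) * (r - 1) = r ^ 2 - 1 := by
        zify [show 1 ≤ r from by omega, show 1 ≤ r ^ 2 from by nlinarith [show 2 ≤ r from by omega]]
        ring
      have h3 : Nat.card f.range * (r - 1) = (r + 1) * (r - 1) := by omega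
      exact Nat.eq_of_mul_eq_mul_right (by omega) h3
    -- freeness of the T-action on Sylow subgroups
    have hfree : ∀ t : GL (Fin 2) F ⧸ Subgroup.center (GL (Fin 2) F), t ∈ f.range → t ≠ 1 →
        ∀ Q : Sylow r (GL (Fin 2) F ⧸ Subgroup.center (GL (Fin 2) F)), t • Q ≠ Q := by
      rintro t ⟨B0, rfl⟩ ht1 Q hQfix
      obtain ⟨a, b, hB⟩ := B0.2
      have hBne : ((B0 : GL (Fin 2) F) : Matrix (Fin 2) (Fin 2) F) ≠ 0 := by
        intro h0
        have h1 : (1 : Matrix (Fin 2) (Fin 2) F) = 0 := by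
          calc (1 : Matrix (Fin 2) (Fin 2) F)
              = ↑((B0 : GL (Fin 2) F) * (B0 : GL (Fin 2) F)⁻¹) := by simp
            _ = ((B0 : GL (Fin 2) F) : Matrix (Fin 2) (Fin 2) F) * ↑(B0 : GL (Fin 2) F)⁻¹ := rfl
            _ = 0 := by rw [h0, zero_mul]
        exact one_ne_zero h1
      have hb : b ≠ 0 := by
        rintro rfl
        apply ht1
        have ha0 : a ≠ 0 := by
          rintro rfl
          rw [zero_smul, zero_smul, add_zero] at hB
          exact hBne hB
        rw [zero_smul, add_zero] at hB
        rw [hfval]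
        exact (QuotientGroup.eq_one_iff _).mpr ((pgl8_central_iff _).mpr ⟨a, ha0, hB⟩)
      -- a generator of Q
      have hcardQ : Nat.card Q = r := by
        rw [Q.card_eq_multiplicity, hfac, pow_one]
      haveI hQnt : Nontrivial (Q : Subgroup (GL (Fin 2) F ⧸
          Subgroup.center (GL (Fin 2) F))) := by
        rw [← Finite.one_lt_card_iff_nontrivial]
        have : Nat.card (Q : Subgroup (GL (Fin 2) F ⧸
          Subgroup.center (GL (Fin 2) F))) = r := hcardQ
        omega
      obtain ⟨q1, hq1⟩ := exists_ne (1 : (Q : Subgroup (GL (Fin 2) F ⧸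
        Subgroup.center (GL (Fin 2) F))))
      have hx'Q : (q1 : GL (Fin 2) F ⧸ Subgroup.center (GL (Fin 2) F)) ∈
          (Q : Subgroup (GL (Fin 2) F ⧸ Subgroup.center (GL (Fin 2) F))) := q1.2
      have hx'ne : (q1 : GL (Fin 2) F ⧸ Subgroup.center (GL (Fin 2) F)) ≠ 1 := by
        intro h0
        exact hq1 (by ext; exact h0)
      have hordq : orderOf (q1 : GL (Fin 2) F ⧸ Subgroup.center (GL (Fin 2) F)) = r := by
        have heq : orderOf (q1 : GL (Fin 2) F ⧸ Subgroup.center (GL (Fin 2) F)) = orderOf q1 :=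
          orderOf_injective (Q : Subgroup (GL (Fin 2) F ⧸
            Subgroup.center (GL (Fin 2) F))).subtype Subtype.coe_injective q1
        have hdvd' : orderOf q1 ∣ r := by
          have h7 := orderOf_dvd_natCard q1
          have h8 : Nat.card (Q : Subgroup (GL (Fin 2) F ⧸
            Subgroup.center (GL (Fin 2) F))) = r := hcardQ
          rwa [h8] at h7
        have hne1 : orderOf q1 ≠ 1 := by
          rw [Ne, orderOf_eq_one_iff]
          exact hq1
        rw [heq]
        exact ((Nat.dvd_prime hr).mp hdvd').resolve_left hne1
      have hzQ : Subgroup.zpowers (q1 : GL (Fin 2) F ⧸ Subgroup.center (GL (Fin 2) F)) =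
          (Q : Subgroup (GL (Fin 2) F ⧸ Subgroup.center (GL (Fin 2) F))) := by
        apply Subgroup.eq_of_le_of_card_ge (Subgroup.zpowers_le.mpr hx'Q)
        rw [Nat.card_zpowers, hordq]
        exact le_of_eq hcardQ
      have hnorm : f B0 ∈ Subgroup.normalizer ((Q : Subgroup (GL (Fin 2) F ⧸
          Subgroup.center (GL (Fin 2) F))) : Set _) := by
        have h' : f B0 ∈ MulAction.stabilizer
            (GL (Fin 2) F ⧸ Subgroup.center (GL (Fin 2) F)) Q := hQfix
        rw [Sylow.stabilizer_eq_normalizer] at h'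
        exact h'
      have hconj : f B0 * ↑q1 * (f B0)⁻¹ ∈
          Subgroup.zpowers (q1 : GL (Fin 2) F ⧸ Subgroup.center (GL (Fin 2) F)) := by
        rw [hzQ]
        exact (Subgroup.mem_normalizer_iff.mp hnorm _).mp hx'Q
      obtain ⟨m, hm⟩ := hconj
      have hm' : (q1 : GL (Fin 2) F ⧸ Subgroup.center (GL (Fin 2) F)) ^ m
          = f B0 * ↑q1 * (f B0)⁻¹ := hm
      obtain ⟨k, hk⟩ : ∃ k : ℕ, (k : ℤ) = m % (r : ℤ) :=
        ⟨(m % (r : ℤ)).toNat, Int.toNat_of_nonneg (Int.emod_nonneg m (by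
          simp [hr.ne_zero]))⟩
      have hklt : k < r := by
        have h2 := Int.emod_lt_of_pos m (show (0:ℤ) < (r:ℤ) by positivity)
        omega
      have hkeq : (q1 : GL (Fin 2) F ⧸ Subgroup.center (GL (Fin 2) F)) ^ k
          = f B0 * ↑q1 * (f B0)⁻¹ := by
        rw [← hm', ← zpow_natCast, hk]
        nth_rewrite 2 [← zpow_mod_orderOf]
        rw [hordq]
      have hk0 : k ≠ 0 := by
        rintro rfl
        rw [pow_zero] at hkeq
        exact hx'ne (conj_eq_one_iff.mp hkeq.symm)
      -- lift q1 to X in GL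
      obtain ⟨X, hX⟩ := QuotientGroup.mk_surjective
        (q1 : GL (Fin 2) F ⧸ Subgroup.center (GL (Fin 2) F))
      have hXr1 : (QuotientGroup.mk (X ^ r) : GL (Fin 2) F ⧸
          Subgroup.center (GL (Fin 2) F)) = 1 := by
        rw [QuotientGroup.mk_pow, hX]
        have h9 := pow_orderOf_eq_one (q1 : GL (Fin 2) F ⧸ Subgroup.center (GL (Fin 2) F))
        rwa [hordq] at h9
      obtain ⟨z, hz0, hzeq⟩ := (pgl8_central_iff _).mp ((QuotientGroup.eq_one_iff _).mp hXr1)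
      have hPr : (X : Matrix (Fin 2) (Fin 2) F) ^ r = z • 1 := by
        rw [← Units.val_pow_eq_pow_val, hzeq]
      have hNr : ((X : Matrix (Fin 2) (Fin 2) F) - z • 1) ^ r = 0 := by
        have hcm : Commute ((X : Matrix (Fin 2) (Fin 2) F))
            (-(z • 1) : Matrix (Fin 2) (Fin 2) F) := by
          show _ * _ = _ * _
          simp only [mul_neg, neg_mul, Matrix.mul_smul, Matrix.smul_mul, mul_one, one_mul]
        rw [sub_eq_add_neg, add_pow_char_of_commute _ hcm, hPr]
        have hnegpow : (-(z • (1 : Matrix (Fin 2) (Fin 2) F))) ^ r = -(z ^ r • 1) := by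
          rw [(hr.odd_of_ne_two (by omega)).neg_pow, smul_pow, one_pow]
        rw [hnegpow]
        have hzr : z ^ r = z := by rw [← hF]; exact FiniteField.pow_card z
        rw [hzr, add_neg_cancel]
      have hN0 : (X : Matrix (Fin 2) (Fin 2) F) - z • 1 ≠ 0 := by
        intro h0
        have hXc : (X : Matrix (Fin 2) (Fin 2) F) = z • 1 := by rwa [sub_eq_zero] at h0
        have h1 : (QuotientGroup.mk X : GL (Fin 2) F ⧸
            Subgroup.center (GL (Fin 2) F)) = 1 :=
          (QuotientGroup.eq_one_iff X).mpr ((pgl8_central_iff X).mpr ⟨z, hz0, hXc⟩)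
        rw [hX] at h1
        exact hx'ne h1
      have hN2 := pgl8_sq_zero _ r hr.ne_zero hNr
      obtain ⟨v₀, hv₀0, hv₀, huniq⟩ := pgl8_ker _ hN0 hN2
      have hPv : (X : Matrix (Fin 2) (Fin 2) F).mulVec v₀ = z • v₀ := by
        have h5 : ((X : Matrix (Fin 2) (Fin 2) F) - z • 1).mulVec v₀ = 0 := hv₀
        rw [Matrix.sub_mulVec, sub_eq_zero] at h5
        rw [h5, Matrix.smul_mulVec, Matrix.one_mulVec]
      -- the conjugation relation, lifted to matrices
      have hmkconj : (QuotientGroup.mk ((B0 : GL (Fin 2) F) * X * (B0 : GL (Fin 2) F)⁻¹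
          * (X ^ k)⁻¹) : GL (Fin 2) F ⧸ Subgroup.center (GL (Fin 2) F)) = 1 := by
        rw [QuotientGroup.mk_mul, QuotientGroup.mk_mul, QuotientGroup.mk_mul,
          QuotientGroup.mk_inv, QuotientGroup.mk_inv, QuotientGroup.mk_pow, hX, ← hfval, ← hkeq]
        rw [mul_inv_cancel]
      obtain ⟨c, hc0, hceq⟩ := (pgl8_central_iff _).mp ((QuotientGroup.eq_one_iff _).mp hmkconj)
      have hXkiX : (((X ^ k)⁻¹ : GL (Fin 2) F) : Matrix (Fin 2) (Fin 2) F) *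
          ((X ^ k : GL (Fin 2) F) : Matrix (Fin 2) (Fin 2) F) = 1 := by
        rw [← Units.val_mul, inv_mul_cancel, Units.val_one]
      have hmat : ((B0 : GL (Fin 2) F) : Matrix (Fin 2) (Fin 2) F) *
          ((X : GL (Fin 2) F) : Matrix (Fin 2) (Fin 2) F) *
          (((B0 : GL (Fin 2) F)⁻¹ : GL (Fin 2) F) : Matrix (Fin 2) (Fin 2) F)
          = c • ((X : Matrix (Fin 2) (Fin 2) F) ^ k) := by
        have h6 := congrArg (fun M : Matrix (Fin 2) (Fin 2) F =>
          M * ((X ^ k : GL (Fin 2) F) : Matrix (Fin 2) (Fin 2) F)) hceq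
        simp only [Units.val_mul] at h6
        rw [mul_assoc _ (((X ^ k)⁻¹ : GL (Fin 2) F) : Matrix (Fin 2) (Fin 2) F)
          ((X ^ k : GL (Fin 2) F) : Matrix (Fin 2) (Fin 2) F), hXkiX, mul_one] at h6
        rw [h6, Matrix.smul_mul, one_mul, Units.val_pow_eq_pow_val]
      have hBiB : (((B0 : GL (Fin 2) F)⁻¹ : GL (Fin 2) F) : Matrix (Fin 2) (Fin 2) F) *
          ((B0 : GL (Fin 2) F) : Matrix (Fin 2) (Fin 2) F) = 1 := by
        rw [← Units.val_mul, inv_mul_cancel, Units.val_one]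
      -- w = B v₀ satisfies (c • X^k) w = z w
      have hweq : c • ((X : Matrix (Fin 2) (Fin 2) F) ^ k).mulVec
          (((B0 : GL (Fin 2) F) : Matrix (Fin 2) (Fin 2) F).mulVec v₀)
          = z • (((B0 : GL (Fin 2) F) : Matrix (Fin 2) (Fin 2) F).mulVec v₀) := by
        rw [← Matrix.smul_mulVec, ← hmat, Matrix.mulVec_mulVec,
          mul_assoc (((B0 : GL (Fin 2) F) : Matrix (Fin 2) (Fin 2) F) *
            ((X : GL (Fin 2) F) : Matrix (Fin 2) (Fin 2) F)), hBiB, mul_one,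
          ← Matrix.mulVec_mulVec, hPv, Matrix.mulVec_smul]
      -- binomial expansion of X^k
      have hk1 : k - 1 + 1 = k := Nat.succ_pred_eq_of_pos (Nat.pos_of_ne_zero hk0)
      have hcast : ((k - 1 : ℕ) : F) + 1 = (k : F) := by
        have h9 : ((k - 1 + 1 : ℕ) : F) = (k : F) := by rw [hk1]
        push_cast at h9
        exact h9
      have hXk : (X : Matrix (Fin 2) (Fin 2) F) ^ k
          = z ^ k • 1 + ((k : F) * z ^ (k - 1)) • ((X : Matrix (Fin 2) (Fin 2) F) - z • 1) := by
        have h10 := pgl8_binom z ((X : Matrix (Fin 2) (Fin 2) F) - z • 1) hN2 (k - 1)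
        rw [hk1, hcast] at h10
        have h11 : z • (1 : Matrix (Fin 2) (Fin 2) F) + ((X : Matrix (Fin 2) (Fin 2) F) - z • 1)
            = (X : Matrix (Fin 2) (Fin 2) F) := add_sub_cancel _ _
        rw [h11] at h10
        exact h10
      have happ : ((X : Matrix (Fin 2) (Fin 2) F) ^ k).mulVec
          (((B0 : GL (Fin 2) F) : Matrix (Fin 2) (Fin 2) F).mulVec v₀)
          = z ^ k • (((B0 : GL (Fin 2) F) : Matrix (Fin 2) (Fin 2) F).mulVec v₀)
            + ((k : F) * z ^ (k - 1)) • (((X : Matrix (Fin 2) (Fin 2) F) - z • 1).mulVec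
              (((B0 : GL (Fin 2) F) : Matrix (Fin 2) (Fin 2) F).mulVec v₀)) := by
        rw [hXk, Matrix.add_mulVec, Matrix.smul_mulVec, Matrix.smul_mulVec,
          Matrix.one_mulVec]
      have hNN : ((X : Matrix (Fin 2) (Fin 2) F) - z • 1).mulVec
          ((((X : Matrix (Fin 2) (Fin 2) F) - z • 1)).mulVec
            (((B0 : GL (Fin 2) F) : Matrix (Fin 2) (Fin 2) F).mulVec v₀)) = 0 := by
        rw [Matrix.mulVec_mulVec, hN2, Matrix.zero_mulVec]
      rw [happ, smul_add, smul_smul, smul_smul] at hweq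
      -- hweq : (c * z^k) • w + (c * coef) • Nw = z • w
      have hNw0 : (((X : Matrix (Fin 2) (Fin 2) F) - z • 1)).mulVec
          (((B0 : GL (Fin 2) F) : Matrix (Fin 2) (Fin 2) F).mulVec v₀) = 0 := by
        by_contra hNw
        have h12 := congrArg (((X : Matrix (Fin 2) (Fin 2) F) - z • 1)).mulVec hweq
        rw [Matrix.mulVec_add, Matrix.mulVec_smul, Matrix.mulVec_smul, Matrix.mulVec_smul,
          hNN, smul_zero, add_zero] at h12
        have hcz : c * z ^ k = z := by
          have h15 : (c * z ^ k - z) • (((X : Matrix (Fin 2) (Fin 2) F) - z • 1).mulVec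
              (((B0 : GL (Fin 2) F) : Matrix (Fin 2) (Fin 2) F).mulVec v₀)) = 0 := by
            rw [sub_smul, h12, sub_self]
          rcases smul_eq_zero.mp h15 with h16 | h16
          · exact sub_eq_zero.mp h16
          · exact absurd h16 hNw
        rw [hcz] at hweq
        have h17 : (c * ((k : F) * z ^ (k - 1))) • (((X : Matrix (Fin 2) (Fin 2) F) - z • 1).mulVec
            (((B0 : GL (Fin 2) F) : Matrix (Fin 2) (Fin 2) F).mulVec v₀)) = 0 := by
          have := hweq
          rwa [add_eq_left] at this
        rcases smul_eq_zero.mp h17 with h18 | h18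
        · rcases mul_eq_zero.mp h18 with h19 | h19
          · exact hc0 h19
          · rcases mul_eq_zero.mp h19 with h20 | h20
            · have h21 : (r : ℕ) ∣ k := (CharP.cast_eq_zero_iff F r k).mp h20
              have h22 : r ≤ k := Nat.le_of_dvd (Nat.pos_of_ne_zero hk0) h21
              omega
            · exact absurd h20 (pow_ne_zero _ hz0)
        · exact absurd h18 hNw
      obtain ⟨d, hd⟩ := huniq _ hNw0
      rw [hB, Matrix.add_mulVec, Matrix.smul_mulVec, Matrix.smul_mulVec,
        Matrix.one_mulVec] at hd
      apply hyA
      refine ⟨v₀, (d - a) / b, hv₀0, ?_⟩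
      funext i
      have h14 := congrFun hd i
      simp only [Pi.add_apply, Pi.smul_apply, smul_eq_mul, Pi.zero_apply] at h14
      show (A : Matrix (Fin 2) (Fin 2) F).mulVec v₀ i = ((d - a) / b) * v₀ i
      rw [div_mul_eq_mul_div, eq_div_iff hb]
      linear_combination h14
    -- transitivity of the T-action and conclusion
    haveI : Fintype (Sylow r (GL (Fin 2) F ⧸ Subgroup.center (GL (Fin 2) F))) :=
      Fintype.ofFinite _
    haveI : Fintype f.range := Fintype.ofFinite _
    have htrans : ∀ R : Sylow r (GL (Fin 2) F ⧸ Subgroup.center (GL (Fin 2) F)),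
        ∃ t ∈ f.range, t • Q₀ = R := by
      have hinj : Function.Injective
          (fun t : f.range => (t : GL (Fin 2) F ⧸ Subgroup.center (GL (Fin 2) F)) • Q₀) := by
        intro t₁ t₂ h12
        by_contra hne
        have hne' : ((t₂ : GL (Fin 2) F ⧸ Subgroup.center (GL (Fin 2) F)))⁻¹ * ↑t₁ ≠ 1 := by
          intro h0
          exact hne (Subtype.ext (inv_mul_eq_one.mp h0).symm)
        have hmem : ((t₂ : GL (Fin 2) F ⧸ Subgroup.center (GL (Fin 2) F)))⁻¹ * ↑t₁ ∈ f.range :=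
          mul_mem (inv_mem t₂.2) t₁.2
        apply hfree _ hmem hne' Q₀
        have h12' : (t₁ : GL (Fin 2) F ⧸ Subgroup.center (GL (Fin 2) F)) • Q₀ = ↑t₂ • Q₀ := h12
        rw [mul_smul, h12']
        exact inv_smul_smul _ _
      have hbij : Function.Bijective
          (fun t : f.range => (t : GL (Fin 2) F ⧸ Subgroup.center (GL (Fin 2) F)) • Q₀) := by
        rw [Fintype.bijective_iff_injective_and_card]
        refine ⟨hinj, ?_⟩
        rw [← Nat.card_eq_fintype_card, ← Nat.card_eq_fintype_card, hcardT, hn]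
      intro R
      obtain ⟨t, ht⟩ := hbij.2 R
      exact ⟨t.1, t.2, ht⟩
    intro g
    obtain ⟨t, htT, ht⟩ := htrans (g⁻¹ • Q₀)
    have hgt : (g * t) • Q₀ = Q₀ := by rw [mul_smul, ht, smul_inv_smul]
    refine ⟨g * t, ?_, t⁻¹, ?_, by group⟩
    · have hmem : g * t ∈ MulAction.stabilizer
          (GL (Fin 2) F ⧸ Subgroup.center (GL (Fin 2) F)) Q₀ := hgt
      rw [Sylow.stabilizer_eq_normalizer] at hmem
      rw [← hQ₀]
      exact hmem
    · exact Subgroup.inv_mem _ (hTnorm t htT)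
end
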